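/- arXiv:1102.5409 — 2 statements merged into one kernel-verified Lean document; each statement's English description precedes it below -/
import Mathlib

section
/- Let G = U(T₁,…,T_g) be a unicyclic graph of order n with cycle C_g = u₁⋯u_g and branches T_i of orders n_i, and suppose p ≠ q with n_p, n_q ≥ 2. Form G₁ by moving the whole branch T_q (minus u_q) onto u_p (i.e., T_p^{(1)} is T_p and T_q identified at u_p = u_q, T_q^{(1)} is the single vertex u_q), and form G₂ symmetrically by moving T_p onto u_q. Then W(G) − W(G₁) = (n_p−1)(n_q−1)d_G(u_p,u_q) + (n_q−1)Σ_{i≠p,q} n_i(d_G(u_q,u_i) − d_G(u_p,u_i)) and W(G) − W(G₂) = (n_p−1)(n_q−1)d_G(u_p,u_q) − (n_p−1)Σ_{i≠p,q} n_i(d_G(u_q,u_i) − d_G(u_p,u_i)); consequently W(G) > min{W(G₁), W(G₂)}. -/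
open SimpleGraph Finset

noncomputable def wienerIndex {V : Type*} [Fintype V] (G : SimpleGraph V) : ℕ :=
  (∑ u : V, ∑ v : V, G.dist u v) / 2

noncomputable def vertexDist {V : Type*} [Fintype V] (G : SimpleGraph V) (u : V) : ℕ :=
  ∑ v : V, G.dist u v

/-- The unicyclic graph `U(T₁,…,T_g)`: from the cycle `C_g` on vertices `u₀,…,u_{g-1}`,
identify `u_i` with the root `r i` of the tree `T i`.  The vertex set is the disjoint
union `Σ i, V i`; the edges are the tree edges inside each branch together with the cycle
edges joining consecutive roots. -/
def cycleTrees {g : ℕ} [NeZero g] {V : Fin g → Type*} (T : ∀ i, SimpleGraph (V i)) (r : ∀ i, V i) :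
    SimpleGraph (Σ i, V i) :=
  SimpleGraph.fromRel fun a b =>
    (∃ (i : Fin g) (x y : V i), a = ⟨i, x⟩ ∧ b = ⟨i, y⟩ ∧ (T i).Adj x y) ∨
    (∃ i : Fin g, a = ⟨i, r i⟩ ∧ b = ⟨i + 1, r (i + 1)⟩)

/-- The graph obtained from `U(T₁,…,T_g)` by moving the whole branch `T q` (minus its root
`u_q`) onto `u_p`: the trees `T p` and `T q` are identified at `u_p = u_q`, and the branch
at `u_q` becomes the single vertex `u_q`. -/
def moveBranch {g : ℕ} [NeZero g] {V : Fin g → Type*} (T : ∀ i, SimpleGraph (V i))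
    (r : ∀ i, V i) (p q : Fin g) : SimpleGraph (Σ i, V i) :=
  SimpleGraph.fromRel fun a b =>
    ((∃ (i : Fin g) (x y : V i), a = ⟨i, x⟩ ∧ b = ⟨i, y⟩ ∧ (T i).Adj x y) ∧
      a ≠ ⟨q, r q⟩ ∧ b ≠ ⟨q, r q⟩) ∨
    (∃ c : V q, a = ⟨p, r p⟩ ∧ b = ⟨q, c⟩ ∧ (T q).Adj (r q) c) ∨
    (∃ i : Fin g, a = ⟨i, r i⟩ ∧ b = ⟨i + 1, r (i + 1)⟩)


section Cdist
variable {g : ℕ} [NeZero g]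

/-- cycle distance on `Fin g` -/
def cdist (i j : Fin g) : ℕ := min (j - i).val (i - j).val

lemma mod2g {x : ℕ} (hg : 0 < g) (h : x < 2 * g) : x % g = if x < g then x else x - g := by
  split
  · exact Nat.mod_eq_of_lt ‹_›
  · rw [Nat.mod_eq_sub_mod (by omega)]; exact Nat.mod_eq_of_lt (by omega)

lemma sub_val (i j : Fin g) : (j - i).val = (g - i.val + j.val) % g := by
  rw [Fin.sub_def]

lemma sub_val_cases (i j : Fin g) :
    (j - i).val = if i.val ≤ j.val then j.val - i.val else j.val + g - i.val := by
  have hi := i.isLt; have hj := j.isLt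
  rw [sub_val, mod2g (by omega) (by omega)]
  split <;> split <;> omega

lemma sub_val_add {i j : Fin g} (h : i ≠ j) : (j - i).val + (i - j).val = g := by
  have : i.val ≠ j.val := fun hv => h (Fin.ext hv)
  have hi := i.isLt; have hj := j.isLt
  rw [sub_val_cases, sub_val_cases]; split <;> split <;> omega

lemma cdist_self (i : Fin g) : cdist i i = 0 := by simp [cdist]

lemma cdist_comm (i j : Fin g) : cdist i j = cdist j i := by
  simp [cdist, Nat.min_comm]

lemma cdist_pos {i j : Fin g} (h : i ≠ j) : 0 < cdist i j := by
  have h2 := sub_val_add h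
  have : j - i ≠ 0 := fun hs => h (by rwa [sub_eq_zero, eq_comm] at hs)
  have : (j - i).val ≠ 0 := fun hv => this (Fin.ext hv)
  have := (j - i).isLt; simp only [cdist]; omega

lemma cdist_triangle (i k j : Fin g) : cdist i j ≤ cdist i k + cdist k j := by
  rcases eq_or_ne i j with rfl | hij
  · simp [cdist_self]
  rcases eq_or_ne i k with rfl | hik
  · simp [cdist_self]
  rcases eq_or_ne k j with rfl | hkj
  · simp [cdist_self]
  have h1 := sub_val_add hij
  have h2 := sub_val_add hik
  have h3 := sub_val_add hkj
  have hadd : (j - i) = (j - k) + (k - i) := by abel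
  have hval : (j - i).val = ((j - k).val + (k - i).val) % g := by
    rw [hadd, Fin.val_add]
  have hlt1 := (j - k).isLt
  have hlt2 := (k - i).isLt
  have hg : 0 < g := Nat.pos_of_ne_zero (NeZero.ne g)
  rw [mod2g hg (by omega)] at hval
  unfold cdist
  split at hval <;> omega

lemma cdist_succ (hg : 2 ≤ g) (i : Fin g) : cdist i (i + 1) = 1 := by
  have h1 : ((1 : Fin g)).val = 1 := by
    rw [Fin.val_one']; exact Nat.mod_eq_of_lt (by omega)
  have e1 : (i + 1 - i) = 1 := by abel
  have hne : i ≠ i + 1 := by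
    intro h
    have : (i + 1 - i) = 0 := by rw [← h]; abel
    rw [e1] at this
    have := congrArg Fin.val this
    simp [h1] at this
    omega
  have h2 := sub_val_add hne
  rw [e1, h1] at h2
  rw [cdist, e1, h1]
  omega

lemma cdist_lip (hg : 2 ≤ g) (a k : Fin g) :
    cdist a (k + 1) ≤ cdist a k + 1 ∧ cdist a k ≤ cdist a (k + 1) + 1 := by
  constructor
  · calc cdist a (k + 1) ≤ cdist a k + cdist k (k + 1) := cdist_triangle _ _ _
      _ = cdist a k + 1 := by rw [cdist_succ hg]
  · calc cdist a k ≤ cdist a (k + 1) + cdist (k + 1) k := cdist_triangle _ _ _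
      _ = cdist a (k + 1) + 1 := by rw [cdist_comm (k+1) k, cdist_succ hg]

end Cdist

set_option linter.unusedSectionVars false

section Generic
variable {W : Type*} (G : SimpleGraph W)

lemma walk_lower (D : W → W → ℕ) (hlip : ∀ u a b, G.Adj a b → D a u ≤ D b u + 1)
    (h0 : ∀ u, D u u = 0) {u v : W} (w : G.Walk u v) : D u v ≤ w.length := by
  induction w with
  | nil => simp [h0]
  | @cons a b c h w ih =>
    have := hlip c a b h
    simp only [SimpleGraph.Walk.length_cons]
    omega

lemma dist_eq_of_metric (D : W → W → ℕ) (h0 : ∀ u, D u u = 0)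
    (hlip : ∀ u a b, G.Adj a b → D a u ≤ D b u + 1)
    (hup : ∀ u v, ∃ w : G.Walk u v, w.length ≤ D u v) (u v : W) :
    G.dist u v = D u v := by
  obtain ⟨w, hw⟩ := hup u v
  have hreach : G.Reachable u v := ⟨w⟩
  have hle : G.dist u v ≤ D u v := le_trans (SimpleGraph.dist_le w) hw
  obtain ⟨w', hw'⟩ := hreach.exists_walk_length_eq_dist
  have := walk_lower G D hlip h0 w'
  omega

end Generic

section Main
variable {g : ℕ} [NeZero g] (hg : 3 ≤ g) {V : Fin g → Type*}
  (T : ∀ i, SimpleGraph (V i)) (r : ∀ i, V i)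

/-- distance of a vertex to its own root -/
noncomputable def dd (u : Σ i, V i) : ℕ := (T u.1).dist u.2 (r u.1)

/-- the distance function on `cycleTrees` -/
noncomputable def DG (u v : Σ i, V i) : ℕ :=
  if h : u.1 = v.1 then (T v.1).dist (h ▸ u.2) v.2
  else dd T r u + cdist u.1 v.1 + dd T r v

lemma DG_same {i : Fin g} (x y : V i) : DG T r ⟨i, x⟩ ⟨i, y⟩ = (T i).dist x y := by
  rw [DG, dif_pos rfl]

lemma DG_ne {i j : Fin g} (h : i ≠ j) (x : V i) (y : V j) :
    DG T r ⟨i, x⟩ ⟨j, y⟩ = (T i).dist x (r i) + cdist i j + (T j).dist (r j) y := by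
  rw [DG, dif_neg h, dd, dd]
  simp [SimpleGraph.dist_comm]

lemma DG_self (u : Σ i, V i) : DG T r u u = 0 := by
  obtain ⟨i, x⟩ := u; rw [DG_same]; exact SimpleGraph.dist_self

-- adjacency facts in cycleTrees
lemma ct_adj_tree {i : Fin g} {x y : V i} (h : (T i).Adj x y) :
    (cycleTrees T r).Adj ⟨i, x⟩ ⟨i, y⟩ := by
  rw [cycleTrees, SimpleGraph.fromRel_adj]
  exact ⟨by simp [h.ne], Or.inl (Or.inl ⟨i, x, y, rfl, rfl, h⟩)⟩

lemma fin_ne_succ (hg : 3 ≤ g) (i : Fin g) : i ≠ i + 1 := by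
  intro h
  have : (i + 1 - i) = 0 := by rw [← h]; abel
  have e1 : (i + 1 - i : Fin g) = 1 := by abel
  rw [e1] at this
  have := congrArg Fin.val this
  rw [Fin.val_one'] at this
  simp [Nat.mod_eq_of_lt (show 1 < g by omega)] at this

lemma ct_adj_cyc (hg : 3 ≤ g) (i : Fin g) :
    (cycleTrees T r).Adj ⟨i, r i⟩ ⟨i + 1, r (i + 1)⟩ := by
  rw [cycleTrees, SimpleGraph.fromRel_adj]
  refine ⟨?_, Or.inl (Or.inr ⟨i, rfl, rfl⟩)⟩
  intro h
  exact fin_ne_succ hg i (congrArg Sigma.fst h)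

/-- hom from branch tree into cycleTrees -/
def ctHom (i : Fin g) : T i →g cycleTrees T r where
  toFun x := ⟨i, x⟩
  map_rel' h := ct_adj_tree T r h

lemma exists_hom_walk {A : Type*} {H : SimpleGraph A} {G' : SimpleGraph (Σ i, V i)}
    (hconn : H.Connected) (φ : H →g G') (x y : A) :
    ∃ w : G'.Walk (φ x) (φ y), w.length ≤ H.dist x y := by
  obtain ⟨w, hw⟩ := hconn.exists_walk_length_eq_dist x y
  exact ⟨w.map φ, by rw [SimpleGraph.Walk.length_map, hw]⟩

lemma sub_one_val {a : Fin g} (h : a ≠ 0) : (a - 1).val = a.val - 1 := by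
  have h1 : ((1 : Fin g)).val = 1 := by
    rw [Fin.val_one']
    exact Nat.mod_eq_of_lt (by have := a.isLt; omega)
  have hv : a.val ≠ 0 := fun hv => h (Fin.ext hv)
  rw [sub_val_cases, h1]
  have := a.isLt
  split <;> omega

lemma exists_root_walk_fwd {G' : SimpleGraph (Σ i, V i)}
    (hcyc : ∀ k : Fin g, G'.Adj ⟨k, r k⟩ ⟨k + 1, r (k + 1)⟩) :
    ∀ (n : ℕ) (i j : Fin g), (j - i).val = n →
      ∃ w : G'.Walk ⟨i, r i⟩ ⟨j, r j⟩, w.length ≤ n := by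
  intro n
  induction n with
  | zero =>
    intro i j h
    have : j - i = 0 := Fin.ext h
    have : j = i := by rwa [sub_eq_zero] at this
    subst this
    exact ⟨SimpleGraph.Walk.nil, by simp⟩
  | succ n ih =>
    intro i j h
    have hne : j - i ≠ 0 := fun hz => by simp [hz] at h
    have : (j - (i + 1)).val = n := by
      have : j - (i + 1) = (j - i) - 1 := by abel
      rw [this, sub_one_val hne, h]
      omega
    obtain ⟨w, hw⟩ := ih (i + 1) j this
    exact ⟨SimpleGraph.Walk.cons (hcyc i) w, by simp; omega⟩

lemma exists_root_walk {G' : SimpleGraph (Σ i, V i)}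
    (hcyc : ∀ k : Fin g, G'.Adj ⟨k, r k⟩ ⟨k + 1, r (k + 1)⟩) (i j : Fin g) :
    ∃ w : G'.Walk ⟨i, r i⟩ ⟨j, r j⟩, w.length ≤ cdist i j := by
  rcases le_total ((j - i).val) ((i - j).val) with hle | hle
  · obtain ⟨w, hw⟩ := exists_root_walk_fwd r hcyc _ i j rfl
    exact ⟨w, by rw [cdist, min_eq_left hle]; exact hw⟩
  · obtain ⟨w, hw⟩ := exists_root_walk_fwd r hcyc _ j i rfl
    exact ⟨w.reverse, by rw [cdist, min_eq_right hle, SimpleGraph.Walk.length_reverse]; exact hw⟩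


variable {T} in
lemma tree_lip (hT : ∀ i, (T i).IsTree) {k : Fin g} {y z : V k} (h : (T k).Adj y z)
    (x : V k) : (T k).dist x y ≤ (T k).dist x z + 1 := by
  have h1 : (T k).dist z y ≤ 1 := SimpleGraph.dist_le (SimpleGraph.Walk.cons h.symm .nil)
  have := (hT k).isConnected.dist_triangle (u := x) (v := z) (w := y)
  omega

lemma DG_lip_tree (hT : ∀ i, (T i).IsTree) {k : Fin g} {y z : V k} (h : (T k).Adj y z)
    (u : Σ i, V i) : DG T r ⟨k, y⟩ u ≤ DG T r ⟨k, z⟩ u + 1 := by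
  obtain ⟨j, w⟩ := u
  by_cases hkj : k = j
  · subst hkj
    rw [DG_same, DG_same]
    rw [SimpleGraph.dist_comm (u := y), SimpleGraph.dist_comm (u := z)]
    exact tree_lip hT h w
  · rw [DG_ne T r hkj, DG_ne T r hkj]
    have := tree_lip hT h (r k)
    rw [SimpleGraph.dist_comm (u := r k) (v := y),
      SimpleGraph.dist_comm (u := r k) (v := z)] at this
    omega

lemma DG_lip_cyc (hg : 3 ≤ g) (k : Fin g) (u : Σ i, V i) :
    DG T r ⟨k, r k⟩ u ≤ DG T r ⟨k + 1, r (k + 1)⟩ u + 1 ∧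
    DG T r ⟨k + 1, r (k + 1)⟩ u ≤ DG T r ⟨k, r k⟩ u + 1 := by
  obtain ⟨j, w⟩ := u
  have hks : k ≠ k + 1 := fin_ne_succ hg k
  by_cases h1 : k = j
  · subst h1
    rw [DG_same, DG_ne T r (Ne.symm hks)]
    rw [SimpleGraph.dist_self, cdist_comm, cdist_succ (by omega)]
    omega
  · by_cases h2 : k + 1 = j
    · subst h2
      rw [DG_same, DG_ne T r hks]
      rw [SimpleGraph.dist_self, cdist_succ (by omega)]
      omega
    · rw [DG_ne T r h1, DG_ne T r h2]
      simp only [SimpleGraph.dist_self]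
      have := cdist_lip (show 2 ≤ g by omega) j k
      rw [cdist_comm j k, cdist_comm j (k+1)] at this
      omega

lemma DG_lip (hg : 3 ≤ g) (hT : ∀ i, (T i).IsTree) :
    ∀ (u a b : Σ i, V i), (cycleTrees T r).Adj a b → DG T r a u ≤ DG T r b u + 1 := by
  have key : ∀ a b, ((∃ (i : Fin g) (x y : V i), a = ⟨i, x⟩ ∧ b = ⟨i, y⟩ ∧ (T i).Adj x y) ∨
      (∃ i : Fin g, a = ⟨i, r i⟩ ∧ b = ⟨i + 1, r (i + 1)⟩)) →
      ∀ u, DG T r a u ≤ DG T r b u + 1 ∧ DG T r b u ≤ DG T r a u + 1 := by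
    rintro a b (⟨i, x, y, rfl, rfl, hxy⟩ | ⟨i, rfl, rfl⟩) u
    · exact ⟨DG_lip_tree T r hT hxy u, DG_lip_tree T r hT hxy.symm u⟩
    · exact DG_lip_cyc T r hg i u
  intro u a b hab
  rw [cycleTrees, SimpleGraph.fromRel_adj] at hab
  rcases hab.2 with h | h
  · exact (key a b h u).1
  · exact (key b a h u).2

lemma DG_up (hg : 3 ≤ g) (hT : ∀ i, (T i).IsTree) (u v : Σ i, V i) :
    ∃ w : (cycleTrees T r).Walk u v, w.length ≤ DG T r u v := by
  obtain ⟨i, x⟩ := u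
  obtain ⟨j, y⟩ := v
  by_cases hij : i = j
  · subst hij
    obtain ⟨w, hw⟩ := exists_hom_walk (hT i).isConnected (ctHom T r i) x y
    exact ⟨w, by rwa [DG_same]⟩
  · obtain ⟨w1, h1⟩ : ∃ w : (cycleTrees T r).Walk ⟨i, x⟩ ⟨i, r i⟩, w.length ≤ (T i).dist x (r i) :=
      exists_hom_walk (hT i).isConnected (ctHom T r i) x (r i)
    obtain ⟨w2, h2⟩ := exists_root_walk r (fun k => ct_adj_cyc T r hg k) i j
    obtain ⟨w3, h3⟩ : ∃ w : (cycleTrees T r).Walk ⟨j, r j⟩ ⟨j, y⟩, w.length ≤ (T j).dist (r j) y :=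
      exists_hom_walk (hT j).isConnected (ctHom T r j) (r j) y
    refine ⟨(w1.append w2).append w3, ?_⟩
    rw [DG_ne T r hij]
    simp only [SimpleGraph.Walk.length_append]
    omega

lemma distG (hg : 3 ≤ g) (hT : ∀ i, (T i).IsTree) (u v : Σ i, V i) :
    (cycleTrees T r).dist u v = DG T r u v :=
  dist_eq_of_metric _ _ (DG_self T r) (DG_lip T r hg hT) (DG_up T r hg hT) u v

end Main

section Move
variable {g : ℕ} [NeZero g] {V : Fin g → Type*}
  (T : ∀ i, SimpleGraph (V i)) (r : ∀ i, V i) (p q : Fin g)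

lemma mk_eq_rootq {x : V q} : (⟨q, x⟩ : Σ i, V i) = ⟨q, r q⟩ ↔ x = r q := by simp

lemma mk_ne_rootq {i : Fin g} (h : i ≠ q) (x : V i) :
    (⟨i, x⟩ : Σ i, V i) ≠ ⟨q, r q⟩ := by simp [h]

open Classical in
/-- anchor of a vertex in the moved graph -/
noncomputable def alp (v : Σ i, V i) : Fin g :=
  if v.1 = q ∧ v ≠ ⟨q, r q⟩ then p else v.1

open Classical in
/-- same-component predicate in the moved graph -/
def sameC (u v : Σ i, V i) : Prop :=
  u.1 = v.1 ∧ (u.1 ≠ q ∨ (u = (⟨q, r q⟩ : Σ i, V i) ↔ v = ⟨q, r q⟩))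

open Classical in
/-- the distance function on `moveBranch` -/
noncomputable def DH (u v : Σ i, V i) : ℕ :=
  if sameC r q u v then DG T r u v
  else dd T r u + cdist (alp r p q u) (alp r p q v) + dd T r v

lemma alp_of_ne {i : Fin g} (h : i ≠ q) (x : V i) : alp r p q ⟨i, x⟩ = i := by
  rw [alp, if_neg]; rintro ⟨h1, -⟩; exact h h1

lemma alp_rootq : alp r p q ⟨q, r q⟩ = q := by
  rw [alp, if_neg]; rintro ⟨-, h2⟩; exact h2 rfl

lemma alp_moved {x : V q} (hx : x ≠ r q) : alp r p q ⟨q, x⟩ = p := by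
  rw [alp, if_pos ⟨rfl, by simp [hx]⟩]

lemma alp_root (k : Fin g) : alp r p q ⟨k, r k⟩ = k := by
  by_cases h : k = q
  · subst h; exact alp_rootq _ _ _
  · exact alp_of_ne r p q h _

lemma dd_root (k : Fin g) : dd T r ⟨k, r k⟩ = 0 := SimpleGraph.dist_self

lemma dd_mk {i : Fin g} (x : V i) : dd T r ⟨i, x⟩ = (T i).dist x (r i) := rfl

lemma sameC_same_ne_q {i : Fin g} (h : i ≠ q) (x y : V i) :
    sameC r q (⟨i, x⟩ : Σ i, V i) ⟨i, y⟩ := ⟨rfl, Or.inl h⟩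

lemma DH_same_ne_q {i : Fin g} (h : i ≠ q) (x y : V i) :
    DH T r p q ⟨i, x⟩ ⟨i, y⟩ = (T i).dist x y := by
  rw [DH, if_pos (sameC_same_ne_q r q h x y), DG_same]

lemma DH_qq_moved {x y : V q} (hx : x ≠ r q) (hy : y ≠ r q) :
    DH T r p q ⟨q, x⟩ ⟨q, y⟩ = (T q).dist x y := by
  rw [DH, if_pos ⟨rfl, Or.inr (by simp [hx, hy])⟩, DG_same]

lemma DH_qq_rr : DH T r p q ⟨q, r q⟩ ⟨q, r q⟩ = 0 := by
  rw [DH, if_pos ⟨rfl, Or.inr Iff.rfl⟩, DG_same]; exact SimpleGraph.dist_self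

lemma DH_cross {u v : Σ i, V i} (h : ¬ sameC r q u v) :
    DH T r p q u v = dd T r u + cdist (alp r p q u) (alp r p q v) + dd T r v := by
  rw [DH, if_neg h]

lemma DH_self (u : Σ i, V i) : DH T r p q u u = 0 := by
  rw [DH, if_pos ⟨rfl, Or.inr Iff.rfl⟩]; exact DG_self T r u

lemma not_sameC_of_ne {u v : Σ i, V i} (h : u.1 ≠ v.1) : ¬ sameC r q u v := by
  rintro ⟨h1, -⟩; exact h h1

lemma sameC_qq_iff (x y : V q) :
    sameC r q (⟨q, x⟩ : Σ i, V i) ⟨q, y⟩ ↔ (x = r q ↔ y = r q) := by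
  unfold sameC
  simp

end Move

section Move2
variable {g : ℕ} [NeZero g] {V : Fin g → Type*}
  (T : ∀ i, SimpleGraph (V i)) (r : ∀ i, V i) (p q : Fin g)

lemma mb_adj_tree {k : Fin g} {y z : V k} (h : (T k).Adj y z)
    (hy : (⟨k, y⟩ : Σ i, V i) ≠ ⟨q, r q⟩) (hz : (⟨k, z⟩ : Σ i, V i) ≠ ⟨q, r q⟩) :
    (moveBranch T r p q).Adj ⟨k, y⟩ ⟨k, z⟩ := by
  rw [moveBranch, SimpleGraph.fromRel_adj]
  exact ⟨by simp [h.ne], Or.inl (Or.inl ⟨⟨k, y, z, rfl, rfl, h⟩, hy, hz⟩)⟩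

lemma mb_adj_attach (hpq : p ≠ q) {c : V q} (hc : (T q).Adj (r q) c) :
    (moveBranch T r p q).Adj ⟨p, r p⟩ ⟨q, c⟩ := by
  rw [moveBranch, SimpleGraph.fromRel_adj]
  refine ⟨?_, Or.inl (Or.inr (Or.inl ⟨c, rfl, rfl, hc⟩))⟩
  intro h; exact hpq (congrArg Sigma.fst h)

lemma mb_adj_cyc (hg : 3 ≤ g) (k : Fin g) :
    (moveBranch T r p q).Adj ⟨k, r k⟩ ⟨k + 1, r (k + 1)⟩ := by
  rw [moveBranch, SimpleGraph.fromRel_adj]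
  refine ⟨?_, Or.inl (Or.inr (Or.inr ⟨k, rfl, rfl⟩))⟩
  intro h; exact fin_ne_succ hg k (congrArg Sigma.fst h)

/-- hom from a branch `i ≠ q` into the moved graph -/
def mbHom {i : Fin g} (h : i ≠ q) : T i →g moveBranch T r p q where
  toFun x := ⟨i, x⟩
  map_rel' hxy := mb_adj_tree T r p q hxy (mk_ne_rootq r q h _) (mk_ne_rootq r q h _)

open Classical in
/-- hom from the moved branch `T q` into the moved graph, sending `r q` to `⟨p, r p⟩` -/
noncomputable def phiHom (hpq : p ≠ q) : T q →g moveBranch T r p q where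
  toFun x := if x = r q then ⟨p, r p⟩ else ⟨q, x⟩
  map_rel' := by
    intro x y hxy
    by_cases hx : x = r q
    · subst hx
      rw [if_pos rfl, if_neg hxy.ne']
      exact mb_adj_attach T r p q hpq hxy
    · by_cases hy : y = r q
      · subst hy
        rw [if_neg hxy.ne, if_pos rfl]
        exact (mb_adj_attach T r p q hpq hxy.symm).symm
      · rw [if_neg hx, if_neg hy]
        exact mb_adj_tree T r p q hxy (by simp [hx]) (by simp [hy])

open Classical in
lemma anchor_walk (hT : ∀ i, (T i).IsTree) (hpq : p ≠ q) (u : Σ i, V i) :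
    ∃ w : (moveBranch T r p q).Walk u ⟨alp r p q u, r (alp r p q u)⟩,
      w.length ≤ dd T r u := by
  obtain ⟨i, x⟩ := u
  by_cases hiq : i = q
  · subst hiq
    by_cases hx : x = r i
    · subst hx
      rw [alp_rootq r p i]
      exact ⟨SimpleGraph.Walk.nil, by simp⟩
    · rw [alp_moved r p i hx]
      obtain ⟨w, hw⟩ := exists_hom_walk (hT i).isConnected (phiHom T r p i hpq) x (r i)
      refine ⟨w.copy (show (phiHom T r p i hpq) x = ⟨i, x⟩ from if_neg hx)
        (show (phiHom T r p i hpq) (r i) = ⟨p, r p⟩ from if_pos rfl), ?_⟩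
      rwa [SimpleGraph.Walk.length_copy]
  · rw [alp_of_ne r p q hiq]
    obtain ⟨w, hw⟩ := exists_hom_walk (hT i).isConnected (mbHom T r p q hiq) x (r i)
    exact ⟨w, hw⟩

open Classical in
lemma DH_up (hg : 3 ≤ g) (hT : ∀ i, (T i).IsTree) (hpq : p ≠ q) (u v : Σ i, V i) :
    ∃ w : (moveBranch T r p q).Walk u v, w.length ≤ DH T r p q u v := by
  by_cases hC : sameC r q u v
  · obtain ⟨i, x⟩ := u
    obtain ⟨j, y⟩ := v
    obtain ⟨h1, h2⟩ := hC
    simp only at h1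
    subst h1
    by_cases hiq : i = q
    · subst hiq
      rcases h2 with h2 | h2
      · exact absurd rfl h2
      · rw [mk_eq_rootq, mk_eq_rootq] at h2
        by_cases hx : x = r i
        · have hy := h2.mp hx
          subst hx
          rw [hy]
          refine ⟨SimpleGraph.Walk.nil, by simp⟩
        · have hy : y ≠ r i := fun h => hx (h2.mpr h)
          rw [DH_qq_moved T r p i hx hy]
          obtain ⟨w, hw⟩ := exists_hom_walk (hT i).isConnected (phiHom T r p i hpq) x y
          refine ⟨w.copy (show (phiHom T r p i hpq) x = ⟨i, x⟩ from if_neg hx)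
            (show (phiHom T r p i hpq) y = ⟨i, y⟩ from if_neg hy), ?_⟩
          rwa [SimpleGraph.Walk.length_copy]
    · rw [DH_same_ne_q T r p q hiq]
      obtain ⟨w, hw⟩ := exists_hom_walk (hT i).isConnected (mbHom T r p q hiq) x y
      exact ⟨w, hw⟩
  · rw [DH_cross T r p q hC]
    obtain ⟨w1, h1⟩ := anchor_walk T r p q hT hpq u
    obtain ⟨w2, h2⟩ := exists_root_walk r (fun k => mb_adj_cyc T r p q hg k)
      (alp r p q u) (alp r p q v)
    obtain ⟨w3, h3⟩ := anchor_walk T r p q hT hpq v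
    refine ⟨(w1.append w2).append w3.reverse, ?_⟩
    simp only [SimpleGraph.Walk.length_append, SimpleGraph.Walk.length_reverse]
    omega

end Move2

section Move3
variable {g : ℕ} [NeZero g] {V : Fin g → Type*}
  (T : ∀ i, SimpleGraph (V i)) (r : ∀ i, V i) (p q : Fin g)

lemma tree_dist_adj (hT : ∀ i, (T i).IsTree) {k : Fin g} {y z : V k} (h : (T k).Adj y z) :
    (T k).dist y z = 1 :=
  le_antisymm (SimpleGraph.dist_le (SimpleGraph.Walk.cons h .nil))
    ((hT k).isConnected.pos_dist_of_ne h.ne)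

lemma alp_eq_fst {v : Σ i, V i} (h : v.1 ≠ q ∨ v = ⟨q, r q⟩) : alp r p q v = v.1 := by
  rw [alp, if_neg]
  rintro ⟨h1, h2⟩
  rcases h with h | h
  · exact h h1
  · exact h2 h

lemma alp_eq_of_ne_root {i : Fin g} (x : V i) (hx : (⟨i, x⟩ : Σ i, V i) ≠ ⟨q, r q⟩) :
    alp r p q ⟨i, x⟩ = if i = q then p else i := by
  by_cases h : i = q
  · rw [alp, if_pos ⟨h, hx⟩, if_pos h]
  · rw [alp, if_neg (by rintro ⟨h1, -⟩; exact h h1), if_neg h]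

lemma sameC_iff_left {k j : Fin g} {y z : V k} {wv : V j}
    (hy : (⟨k, y⟩ : Σ i, V i) ≠ ⟨q, r q⟩) (hz : (⟨k, z⟩ : Σ i, V i) ≠ ⟨q, r q⟩) :
    sameC r q (⟨k, y⟩ : Σ i, V i) ⟨j, wv⟩ ↔ sameC r q (⟨k, z⟩ : Σ i, V i) ⟨j, wv⟩ := by
  unfold sameC
  rw [eq_false hy, eq_false hz]

lemma DH_lip_tree (hT : ∀ i, (T i).IsTree) {k : Fin g} {y z : V k} (h : (T k).Adj y z)
    (hy : (⟨k, y⟩ : Σ i, V i) ≠ ⟨q, r q⟩) (hz : (⟨k, z⟩ : Σ i, V i) ≠ ⟨q, r q⟩)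
    (u : Σ i, V i) : DH T r p q ⟨k, y⟩ u ≤ DH T r p q ⟨k, z⟩ u + 1 := by
  obtain ⟨j, w⟩ := u
  have hiff := sameC_iff_left r q hy hz (wv := w)
  by_cases hC : sameC r q (⟨k, y⟩ : Σ i, V i) ⟨j, w⟩
  · have hC' := hiff.mp hC
    have h1 : k = j := hC.1
    subst h1
    have eA : DH T r p q ⟨k, y⟩ ⟨k, w⟩ = (T k).dist y w := by
      rw [DH, if_pos hC, DG_same]
    have eB : DH T r p q ⟨k, z⟩ ⟨k, w⟩ = (T k).dist z w := by
      rw [DH, if_pos hC', DG_same]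
    rw [eA, eB, SimpleGraph.dist_comm (u := y), SimpleGraph.dist_comm (u := z)]
    exact tree_lip hT h w
  · have hC' := fun hh => hC (hiff.mpr hh)
    rw [DH_cross T r p q hC, DH_cross T r p q hC']
    rw [alp_eq_of_ne_root r p q y hy, alp_eq_of_ne_root r p q z hz]
    have := tree_lip hT h (r k)
    rw [SimpleGraph.dist_comm (u := r k) (v := y),
      SimpleGraph.dist_comm (u := r k) (v := z)] at this
    simp only [dd_mk]
    omega

lemma DH_lip_attach (hg : 3 ≤ g) (hT : ∀ i, (T i).IsTree) (hpq : p ≠ q) {c : V q}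
    (hc : (T q).Adj (r q) c) (u : Σ i, V i) :
    DH T r p q ⟨p, r p⟩ u ≤ DH T r p q ⟨q, c⟩ u + 1 ∧
    DH T r p q ⟨q, c⟩ u ≤ DH T r p q ⟨p, r p⟩ u + 1 := by
  obtain ⟨j, w⟩ := u
  have hcr : c ≠ r q := hc.ne'
  have hdc : (T q).dist c (r q) = 1 := tree_dist_adj T hT hc.symm
  have halpc : alp r p q ⟨q, c⟩ = p := alp_moved r p q hcr
  have halpp : alp r p q ⟨p, r p⟩ = p := alp_of_ne r p q hpq _
  rcases eq_or_ne p j with rfl | hjp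
  · -- u in branch p
    have eA : DH T r p q ⟨p, r p⟩ ⟨p, w⟩ = (T p).dist (r p) w := DH_same_ne_q T r p q hpq _ _
    have eB : DH T r p q ⟨q, c⟩ ⟨p, w⟩ =
        1 + cdist p p + (T p).dist w (r p) := by
      rw [DH_cross T r p q (not_sameC_of_ne r q (show q ≠ p from hpq.symm)), halpc,
        alp_of_ne r p q hpq, dd_mk, dd_mk, hdc]
    rw [eA, eB, cdist_self, SimpleGraph.dist_comm (u := r p)]
    omega
  · rcases eq_or_ne q j with rfl | hjq
    · -- u in branch q
      by_cases hw : w = r q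
      · subst hw
        have eA : DH T r p q ⟨p, r p⟩ ⟨q, r q⟩ = 0 + cdist p q + 0 := by
          rw [DH_cross T r p q (not_sameC_of_ne r q hpq), halpp, alp_rootq, dd_root, dd_root]
        have eB : DH T r p q ⟨q, c⟩ ⟨q, r q⟩ = 1 + cdist p q + 0 := by
          rw [DH_cross T r p q ?_, halpc, alp_rootq, dd_mk, hdc, dd_root]
          rintro ⟨-, h2⟩
          rcases h2 with h2 | h2
          · exact h2 rfl
          · exact hcr ((mk_eq_rootq r q).mp (h2.mpr rfl))
        rw [eA, eB]
        omega
      · have eA : DH T r p q ⟨p, r p⟩ ⟨q, w⟩ = 0 + cdist p p + (T q).dist w (r q) := by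
          rw [DH_cross T r p q (not_sameC_of_ne r q hpq), halpp, alp_moved r p q hw,
            dd_root, dd_mk]
        have eB : DH T r p q ⟨q, c⟩ ⟨q, w⟩ = (T q).dist c w := DH_qq_moved T r p q hcr hw
        rw [eA, eB, cdist_self]
        have h1 := tree_lip hT hc w
        have h2 := tree_lip hT hc.symm w
        rw [SimpleGraph.dist_comm (u := w) (v := c)] at h1 h2
        omega
    · -- u elsewhere
      have eA : DH T r p q ⟨p, r p⟩ ⟨j, w⟩ =
          0 + cdist p (alp r p q ⟨j, w⟩) + dd T r ⟨j, w⟩ := by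
        rw [DH_cross T r p q (not_sameC_of_ne r q hjp), halpp, dd_root]
      have eB : DH T r p q ⟨q, c⟩ ⟨j, w⟩ =
          1 + cdist p (alp r p q ⟨j, w⟩) + dd T r ⟨j, w⟩ := by
        rw [DH_cross T r p q (not_sameC_of_ne r q hjq), halpc, dd_mk, hdc]
      rw [eA, eB]
      omega

lemma DH_lip_cyc (hg : 3 ≤ g) (hpq : p ≠ q) (k : Fin g) (u : Σ i, V i) :
    DH T r p q ⟨k, r k⟩ u ≤ DH T r p q ⟨k + 1, r (k + 1)⟩ u + 1 ∧
    DH T r p q ⟨k + 1, r (k + 1)⟩ u ≤ DH T r p q ⟨k, r k⟩ u + 1 := by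
  obtain ⟨j, w⟩ := u
  have hks : k ≠ k + 1 := fin_ne_succ hg k
  have hcs : cdist k (k + 1) = 1 := cdist_succ (by omega) k
  by_cases hA : sameC r q (⟨k, r k⟩ : Σ i, V i) ⟨j, w⟩
  · have h1 : k = j := hA.1
    subst h1
    have halpw : alp r p q ⟨k, w⟩ = k := by
      apply alp_eq_fst
      rcases hA.2 with h2 | h2
      · exact Or.inl h2
      · by_cases hkq : k = q
        · exact Or.inr (h2.mp (by rw [hkq]))
        · exact Or.inl hkq
    have eA : DH T r p q ⟨k, r k⟩ ⟨k, w⟩ = (T k).dist (r k) w := by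
      rw [DH, if_pos hA, DG_same]
    have eB : DH T r p q ⟨k + 1, r (k + 1)⟩ ⟨k, w⟩ =
        0 + cdist (k + 1) k + (T k).dist w (r k) := by
      rw [DH_cross T r p q (not_sameC_of_ne r q (Ne.symm hks)), alp_root, halpw, dd_root, dd_mk]
    rw [eA, eB, cdist_comm (k + 1) k, hcs, SimpleGraph.dist_comm (u := r k)]
    omega
  · by_cases hB : sameC r q (⟨k + 1, r (k + 1)⟩ : Σ i, V i) ⟨j, w⟩
    · have h1 : k + 1 = j := hB.1
      subst h1
      have halpw : alp r p q ⟨k + 1, w⟩ = k + 1 := by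
        apply alp_eq_fst
        rcases hB.2 with h2 | h2
        · exact Or.inl h2
        · by_cases hkq : k + 1 = q
          · exact Or.inr (h2.mp (by rw [hkq]))
          · exact Or.inl hkq
      have eA : DH T r p q ⟨k + 1, r (k + 1)⟩ ⟨k + 1, w⟩ = (T (k + 1)).dist (r (k + 1)) w := by
        rw [DH, if_pos hB, DG_same]
      have eB : DH T r p q ⟨k, r k⟩ ⟨k + 1, w⟩ =
          0 + cdist k (k + 1) + (T (k + 1)).dist w (r (k + 1)) := by
        rw [DH_cross T r p q (not_sameC_of_ne r q hks), alp_root, halpw, dd_root, dd_mk]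
      rw [eA, eB, hcs, SimpleGraph.dist_comm (u := r (k + 1))]
      omega
    · have eA : DH T r p q ⟨k, r k⟩ ⟨j, w⟩ =
          0 + cdist k (alp r p q ⟨j, w⟩) + dd T r ⟨j, w⟩ := by
        rw [DH_cross T r p q hA, alp_root, dd_root]
      have eB : DH T r p q ⟨k + 1, r (k + 1)⟩ ⟨j, w⟩ =
          0 + cdist (k + 1) (alp r p q ⟨j, w⟩) + dd T r ⟨j, w⟩ := by
        rw [DH_cross T r p q hB, alp_root, dd_root]
      rw [eA, eB]
      have := cdist_lip (show 2 ≤ g by omega) (alp r p q ⟨j, w⟩) k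
      rw [cdist_comm (alp r p q ⟨j, w⟩) k, cdist_comm (alp r p q ⟨j, w⟩) (k + 1)] at this
      omega

lemma DH_lip (hg : 3 ≤ g) (hT : ∀ i, (T i).IsTree) (hpq : p ≠ q) :
    ∀ (u a b : Σ i, V i), (moveBranch T r p q).Adj a b →
      DH T r p q a u ≤ DH T r p q b u + 1 := by
  have key : ∀ a b, (((∃ (i : Fin g) (x y : V i), a = ⟨i, x⟩ ∧ b = ⟨i, y⟩ ∧ (T i).Adj x y) ∧
      a ≠ ⟨q, r q⟩ ∧ b ≠ ⟨q, r q⟩) ∨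
      (∃ c : V q, a = ⟨p, r p⟩ ∧ b = ⟨q, c⟩ ∧ (T q).Adj (r q) c) ∨
      (∃ i : Fin g, a = ⟨i, r i⟩ ∧ b = ⟨i + 1, r (i + 1)⟩)) →
      ∀ u, DH T r p q a u ≤ DH T r p q b u + 1 ∧ DH T r p q b u ≤ DH T r p q a u + 1 := by
    rintro a b (⟨⟨i, x, y, rfl, rfl, hxy⟩, ha, hb⟩ | ⟨c, rfl, rfl, hc⟩ | ⟨i, rfl, rfl⟩) u
    · exact ⟨DH_lip_tree T r p q hT hxy ha hb u, DH_lip_tree T r p q hT hxy.symm hb ha u⟩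
    · exact (DH_lip_attach T r p q hg hT hpq hc u).symm.imp id id |>.symm |>.imp id id
    · exact DH_lip_cyc T r p q hg hpq i u
  intro u a b hab
  rw [moveBranch, SimpleGraph.fromRel_adj] at hab
  rcases hab.2 with h | h
  · exact (key a b h u).1
  · exact (key b a h u).2

lemma distH (hg : 3 ≤ g) (hT : ∀ i, (T i).IsTree) (hpq : p ≠ q) (u v : Σ i, V i) :
    (moveBranch T r p q).dist u v = DH T r p q u v :=
  dist_eq_of_metric _ _ (DH_self T r p q) (DH_lip T r p q hg hT hpq)
    (DH_up T r p q hg hT hpq) u v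

end Move3

section EvenSum
open Classical in
lemma even_sum_sym {W : Type*} [Fintype W] (f : W → W → ℕ)
    (hsym : ∀ u v, f u v = f v u) (hdiag : ∀ u, f u u = 0) :
    2 ∣ ∑ u, ∑ v, f u v := by
  classical
  rw [← ZMod.natCast_eq_zero_iff]
  push_cast
  rw [← Finset.sum_product']
  refine Finset.sum_involution (fun a _ => (a.2, a.1)) ?_ ?_ (fun a ha => Finset.mem_univ _)
    (fun a ha => rfl)
  · intro a ha
    show ((f a.1 a.2 : ℕ) : ZMod 2) + ((f a.2 a.1 : ℕ) : ZMod 2) = 0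
    rw [hsym a.1 a.2, ← Nat.cast_add, ← two_mul, Nat.cast_mul]
    exact mul_eq_zero_of_left (by decide) _
  · intro a ha hne
    intro h
    have h1 : a.1 = a.2 := congrArg Prod.snd h
    apply hne
    show ((f a.1 a.2 : ℕ) : ZMod 2) = 0
    rw [h1, hdiag]
    simp

lemma two_mul_wiener {W : Type*} [Fintype W] (G : SimpleGraph W) :
    (wienerIndex G : ℤ) * 2 = ∑ u, ∑ v, (G.dist u v : ℤ) := by
  have hdvd : 2 ∣ ∑ u, ∑ v, G.dist u v :=
    even_sum_sym _ (fun u v => SimpleGraph.dist_comm) (fun u => SimpleGraph.dist_self)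
  have : wienerIndex G * 2 = ∑ u, ∑ v, G.dist u v := Nat.div_mul_cancel hdvd
  exact_mod_cast congrArg (Nat.cast : ℕ → ℤ) this

end EvenSum

section Sums
variable {g : ℕ} [NeZero g] {V : Fin g → Type*} [∀ i, Fintype (V i)]
  (T : ∀ i, SimpleGraph (V i)) (r : ∀ i, V i) (p q : Fin g)

open Classical in
noncomputable def chi (v : Σ i, V i) : ℤ :=
  if v.1 = q ∧ v ≠ ⟨q, r q⟩ then 1 else 0

open Classical in
noncomputable def psi (v : Σ i, V i) : ℤ :=
  if v.1 = q then (if v = ⟨q, r q⟩ then -(cdist p q : ℤ) else 0)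
  else ((cdist q v.1 : ℤ) - cdist p v.1)

lemma chi_of_ne {i : Fin g} (h : i ≠ q) (x : V i) : chi r q ⟨i, x⟩ = 0 := by
  rw [chi, if_neg]; rintro ⟨h1, -⟩; exact h h1

lemma chi_rootq : chi r q (⟨q, r q⟩ : Σ i, V i) = 0 := by
  rw [chi, if_neg]; rintro ⟨-, h2⟩; exact h2 rfl

lemma chi_moved {x : V q} (hx : x ≠ r q) : chi r q (⟨q, x⟩ : Σ i, V i) = 1 := by
  rw [chi, if_pos ⟨rfl, by simp [hx]⟩]

lemma psi_of_ne {i : Fin g} (h : i ≠ q) (x : V i) :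
    psi r p q ⟨i, x⟩ = (cdist q i : ℤ) - cdist p i := by
  rw [psi, if_neg h]

lemma psi_rootq : psi r p q (⟨q, r q⟩ : Σ i, V i) = -(cdist p q : ℤ) := by
  rw [psi, if_pos rfl, if_pos rfl]

lemma psi_moved {x : V q} (hx : x ≠ r q) : psi r p q (⟨q, x⟩ : Σ i, V i) = 0 := by
  rw [psi, if_pos rfl, if_neg (by simp [hx])]

lemma Fpt (hpq : p ≠ q) (u v : Σ i, V i) :
    (DG T r u v : ℤ) - DH T r p q u v =
      chi r q u * psi r p q v + psi r p q u * chi r q v := by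
  obtain ⟨i, x⟩ := u
  obtain ⟨j, y⟩ := v
  by_cases hij : i = j
  · subst hij
    rcases eq_or_ne q i with rfl | hqi
    · rcases eq_or_ne x (r q) with rfl | hx
      · rcases eq_or_ne y (r q) with rfl | hy
        · rw [DG_same, DH_qq_rr, chi_rootq, psi_rootq]; simp
        · -- x = root, y moved
          have hns : ¬ sameC r q (⟨q, r q⟩ : Σ i, V i) ⟨q, y⟩ := by
            rw [sameC_qq_iff]; simp [hy]
          rw [DG_same, DH_cross T r p q hns, alp_rootq, alp_moved r p q hy, dd_root, dd_mk,
            chi_rootq, psi_rootq, chi_moved r q hy, psi_moved r p q hy]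
          rw [SimpleGraph.dist_comm (u := r q) (v := y), cdist_comm q p]
          push_cast
          ring
      · rcases eq_or_ne y (r q) with rfl | hy
        · have hns : ¬ sameC r q (⟨q, x⟩ : Σ i, V i) ⟨q, r q⟩ := by
            rw [sameC_qq_iff]; simp [hx]
          rw [DG_same, DH_cross T r p q hns, alp_rootq, alp_moved r p q hx, dd_root, dd_mk,
            chi_rootq, psi_rootq, chi_moved r q hx, psi_moved r p q hx]
          push_cast
          ring
        · rw [DG_same, DH_qq_moved T r p q hx hy, chi_moved r q hx, chi_moved r q hy,
            psi_moved r p q hx, psi_moved r p q hy]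
          ring
    · rw [DG_same, DH_same_ne_q T r p q (Ne.symm hqi), chi_of_ne r q (Ne.symm hqi),
        chi_of_ne r q (Ne.symm hqi)]
      ring
  · have hdg : DG T r ⟨i, x⟩ ⟨j, y⟩ = dd T r ⟨i, x⟩ + cdist i j + dd T r ⟨j, y⟩ := dif_neg hij
    rw [hdg, DH_cross T r p q (not_sameC_of_ne r q hij)]
    rcases eq_or_ne q i with rfl | hqi
    · have hjq : j ≠ q := fun h => hij h.symm
      rcases eq_or_ne x (r q) with rfl | hx
      · rw [alp_rootq, alp_of_ne r p q hjq, chi_rootq, psi_rootq,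
          chi_of_ne r q hjq, psi_of_ne r p q hjq]
        push_cast
        ring
      · rw [alp_moved r p q hx, alp_of_ne r p q hjq, chi_moved r q hx, psi_moved r p q hx,
          chi_of_ne r q hjq, psi_of_ne r p q hjq]
        push_cast
        ring
    · rcases eq_or_ne q j with rfl | hqj
      · rcases eq_or_ne y (r q) with rfl | hy
        · rw [alp_rootq, alp_of_ne r p q (Ne.symm hqi), chi_rootq, psi_rootq,
            chi_of_ne r q (Ne.symm hqi), psi_of_ne r p q (Ne.symm hqi)]
          push_cast
          ring
        · rw [alp_moved r p q hy, alp_of_ne r p q (Ne.symm hqi), chi_moved r q hy,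
            psi_moved r p q hy, chi_of_ne r q (Ne.symm hqi), psi_of_ne r p q (Ne.symm hqi)]
          rw [cdist_comm i q, cdist_comm i p]
          push_cast
          ring
      · rw [alp_of_ne r p q (Ne.symm hqi), alp_of_ne r p q (Ne.symm hqj),
          chi_of_ne r q (Ne.symm hqi), chi_of_ne r q (Ne.symm hqj)]
        ring

lemma sum_chi : ∑ u : Σ i, V i, chi r q u = (Fintype.card (V q) : ℤ) - 1 := by
  classical
  rw [← Finset.univ_sigma_univ, Finset.sum_sigma]
  rw [Finset.sum_eq_single q]
  · have h1 : ∀ x : V q, chi r q (⟨q, x⟩ : Σ i, V i) = 1 - (if x = r q then 1 else 0) := by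
      intro x
      by_cases hx : x = r q
      · subst hx; rw [chi_rootq, if_pos rfl]; ring
      · rw [chi_moved r q hx, if_neg hx]; ring
    simp only [h1]
    rw [Finset.sum_sub_distrib, Finset.sum_const, Finset.sum_ite_eq' Finset.univ (r q) (fun _ => (1:ℤ))]
    simp [Finset.card_univ]
  · intro i _ hiq
    exact Finset.sum_eq_zero fun x _ => chi_of_ne r q hiq x
  · intro h; exact absurd (Finset.mem_univ q) h

lemma sum_psi (hpq : p ≠ q) :
    ∑ v : Σ i, V i, psi r p q v =
      ((Fintype.card (V p) : ℤ) - 1) * cdist p q +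
      ∑ i ∈ Finset.univ.filter (fun i => i ≠ p ∧ i ≠ q),
        (Fintype.card (V i) : ℤ) * ((cdist q i : ℤ) - cdist p i) := by
  classical
  rw [← Finset.univ_sigma_univ, Finset.sum_sigma]
  set f : Fin g → ℤ := fun i => ∑ x : V i, psi r p q ⟨i, x⟩ with hf
  have hfq : f q = -(cdist p q : ℤ) := by
    rw [hf]
    have h1 : ∀ x : V q, psi r p q (⟨q, x⟩ : Σ i, V i) =
        if x = r q then -(cdist p q : ℤ) else 0 := by
      intro x
      by_cases hx : x = r q
      · subst hx; rw [psi_rootq, if_pos rfl]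
      · rw [psi_moved r p q hx, if_neg hx]
    simp only [h1]
    rw [Finset.sum_ite_eq' Finset.univ (r q) (fun _ => -(cdist p q : ℤ))]
    simp
  have hfne : ∀ i, i ≠ q → f i = (Fintype.card (V i) : ℤ) * ((cdist q i : ℤ) - cdist p i) := by
    intro i hiq
    rw [hf]
    simp only [psi_of_ne r p q hiq]
    rw [Finset.sum_const, Fintype.card]
    push_cast
    ring
  have hstep1 : ∑ i, f i = f q + ∑ i ∈ Finset.univ.erase q, f i :=
    (Finset.add_sum_erase Finset.univ f (Finset.mem_univ q)).symm
  have hpmem : p ∈ Finset.univ.erase q := Finset.mem_erase.mpr ⟨hpq, Finset.mem_univ p⟩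
  have hstep2 : ∑ i ∈ Finset.univ.erase q, f i =
      f p + ∑ i ∈ (Finset.univ.erase q).erase p, f i :=
    (Finset.add_sum_erase _ f hpmem).symm
  have hset : (Finset.univ.erase q).erase p
      = Finset.univ.filter (fun i => i ≠ p ∧ i ≠ q) := by
    ext i
    simp [and_comm]
  have hfp : f p = (Fintype.card (V p) : ℤ) * cdist p q := by
    rw [hfne p hpq, cdist_comm q p, cdist_self]
    push_cast
    ring
  have hrest : ∑ i ∈ (Finset.univ.erase q).erase p, f i =
      ∑ i ∈ Finset.univ.filter (fun i => i ≠ p ∧ i ≠ q),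
        (Fintype.card (V i) : ℤ) * ((cdist q i : ℤ) - cdist p i) := by
    rw [hset]
    refine Finset.sum_congr rfl fun i hi => ?_
    rw [Finset.mem_filter] at hi
    exact hfne i hi.2.2
  rw [hstep1, hstep2, hfq, hfp, hrest]
  ring

end Sums

section Final
variable {g : ℕ} [NeZero g] {V : Fin g → Type*} [∀ i, Fintype (V i)]
  (T : ∀ i, SimpleGraph (V i)) (r : ∀ i, V i)

lemma dist_roots (hg : 3 ≤ g) (hT : ∀ i, (T i).IsTree) (a b : Fin g) :
    (cycleTrees T r).dist ⟨a, r a⟩ ⟨b, r b⟩ = cdist a b := by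
  rw [distG T r hg hT]
  by_cases hab : a = b
  · subst hab
    rw [DG_same, cdist_self]
    exact SimpleGraph.dist_self
  · have : DG T r ⟨a, r a⟩ ⟨b, r b⟩ = dd T r ⟨a, r a⟩ + cdist a b + dd T r ⟨b, r b⟩ :=
      dif_neg hab
    rw [this, dd_root, dd_root]
    omega

lemma wiener_diff (hg : 3 ≤ g) (hT : ∀ i, (T i).IsTree) (p q : Fin g) (hpq : p ≠ q) :
    (wienerIndex (cycleTrees T r) : ℤ) - wienerIndex (moveBranch T r p q) =
      ((Fintype.card (V q) : ℤ) - 1) *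
        (((Fintype.card (V p) : ℤ) - 1) * cdist p q +
          ∑ i ∈ Finset.univ.filter (fun i => i ≠ p ∧ i ≠ q),
            (Fintype.card (V i) : ℤ) * ((cdist q i : ℤ) - cdist p i)) := by
  have h1 := two_mul_wiener (cycleTrees T r)
  have h2 := two_mul_wiener (moveBranch T r p q)
  have key : ∑ u : Σ i, V i, ∑ v : Σ i, V i, ((cycleTrees T r).dist u v : ℤ) -
      ∑ u : Σ i, V i, ∑ v : Σ i, V i, ((moveBranch T r p q).dist u v : ℤ) =
      2 * ((∑ u : Σ i, V i, chi r q u) * (∑ v : Σ i, V i, psi r p q v)) := by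
    rw [← Finset.sum_sub_distrib]
    simp_rw [← Finset.sum_sub_distrib]
    have hpt : ∀ u v : Σ i, V i, ((cycleTrees T r).dist u v : ℤ) -
        ((moveBranch T r p q).dist u v : ℤ) =
        chi r q u * psi r p q v + psi r p q u * chi r q v := by
      intro u v
      rw [distG T r hg hT u v, distH T r p q hg hT hpq u v]
      exact Fpt T r p q hpq u v
    simp_rw [hpt]
    simp_rw [Finset.sum_add_distrib]
    rw [← Fintype.sum_mul_sum, ← Fintype.sum_mul_sum]
    ring
  rw [sum_chi, sum_psi r p q hpq] at key
  linarith

theorem wiener_moveBranch' (hg : 3 ≤ g)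
    (hT : ∀ i, (T i).IsTree) (p q : Fin g) (hpq : p ≠ q)
    (hp : 2 ≤ Fintype.card (V p)) (hq : 2 ≤ Fintype.card (V q)) :
    (wienerIndex (cycleTrees T r) : ℤ) - wienerIndex (moveBranch T r p q) =
        ((Fintype.card (V p) : ℤ) - 1) * ((Fintype.card (V q) : ℤ) - 1) *
          (cycleTrees T r).dist ⟨p, r p⟩ ⟨q, r q⟩ +
        ((Fintype.card (V q) : ℤ) - 1) *
          ∑ i ∈ Finset.univ.filter (fun i => i ≠ p ∧ i ≠ q),
            (Fintype.card (V i) : ℤ) *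
              (((cycleTrees T r).dist ⟨q, r q⟩ ⟨i, r i⟩ : ℤ) -
                (cycleTrees T r).dist ⟨p, r p⟩ ⟨i, r i⟩) ∧
      (wienerIndex (cycleTrees T r) : ℤ) - wienerIndex (moveBranch T r q p) =
        ((Fintype.card (V p) : ℤ) - 1) * ((Fintype.card (V q) : ℤ) - 1) *
          (cycleTrees T r).dist ⟨p, r p⟩ ⟨q, r q⟩ -
        ((Fintype.card (V p) : ℤ) - 1) *
          ∑ i ∈ Finset.univ.filter (fun i => i ≠ p ∧ i ≠ q),
            (Fintype.card (V i) : ℤ) *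
              (((cycleTrees T r).dist ⟨q, r q⟩ ⟨i, r i⟩ : ℤ) -
                (cycleTrees T r).dist ⟨p, r p⟩ ⟨i, r i⟩) ∧
      min (wienerIndex (moveBranch T r p q)) (wienerIndex (moveBranch T r q p)) <
        wienerIndex (cycleTrees T r) := by
  classical
  have hDR : ∀ a b : Fin g, (cycleTrees T r).dist ⟨a, r a⟩ ⟨b, r b⟩ = cdist a b :=
    dist_roots T r hg hT
  have hsum : ∑ i ∈ Finset.univ.filter (fun i => i ≠ p ∧ i ≠ q),
      (Fintype.card (V i) : ℤ) *
        (((cycleTrees T r).dist ⟨q, r q⟩ ⟨i, r i⟩ : ℤ) -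
          (cycleTrees T r).dist ⟨p, r p⟩ ⟨i, r i⟩) =
      ∑ i ∈ Finset.univ.filter (fun i => i ≠ p ∧ i ≠ q),
        (Fintype.card (V i) : ℤ) * ((cdist q i : ℤ) - cdist p i) :=
    Finset.sum_congr rfl fun i _ => by rw [hDR q i, hDR p i]
  set S : ℤ := ∑ i ∈ Finset.univ.filter (fun i => i ≠ p ∧ i ≠ q),
    (Fintype.card (V i) : ℤ) * ((cdist q i : ℤ) - cdist p i) with hS
  have hD1 := wiener_diff T r hg hT p q hpq
  have hD2 := wiener_diff T r hg hT q p hpq.symm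
  have hsetswap : Finset.univ.filter (fun i : Fin g => i ≠ q ∧ i ≠ p) =
      Finset.univ.filter (fun i => i ≠ p ∧ i ≠ q) := by
    ext i; simp [and_comm]
  have hnegsum : ∑ i ∈ Finset.univ.filter (fun i => i ≠ q ∧ i ≠ p),
      (Fintype.card (V i) : ℤ) * ((cdist p i : ℤ) - cdist q i) = -S := by
    rw [hsetswap, hS, ← Finset.sum_neg_distrib]
    exact Finset.sum_congr rfl fun i _ => by ring
  rw [hnegsum, cdist_comm q p] at hD2
  have heq1 : (wienerIndex (cycleTrees T r) : ℤ) - wienerIndex (moveBranch T r p q) =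
      ((Fintype.card (V p) : ℤ) - 1) * ((Fintype.card (V q) : ℤ) - 1) * cdist p q +
        ((Fintype.card (V q) : ℤ) - 1) * S := by rw [hD1]; ring
  have heq2 : (wienerIndex (cycleTrees T r) : ℤ) - wienerIndex (moveBranch T r q p) =
      ((Fintype.card (V p) : ℤ) - 1) * ((Fintype.card (V q) : ℤ) - 1) * cdist p q -
        ((Fintype.card (V p) : ℤ) - 1) * S := by rw [hD2]; ring
  refine ⟨by rw [heq1, hDR p q, hsum], by rw [heq2, hDR p q, hsum], ?_⟩
  have hm : (1 : ℤ) ≤ cdist p q := by exact_mod_cast cdist_pos hpq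
  have hp1 : (1 : ℤ) ≤ (Fintype.card (V p) : ℤ) - 1 := by
    have : (2 : ℤ) ≤ Fintype.card (V p) := by exact_mod_cast hp
    omega
  have hq1 : (1 : ℤ) ≤ (Fintype.card (V q) : ℤ) - 1 := by
    have : (2 : ℤ) ≤ Fintype.card (V q) := by exact_mod_cast hq
    omega
  have hA : 0 < ((Fintype.card (V p) : ℤ) - 1) * ((Fintype.card (V q) : ℤ) - 1) * cdist p q := by
    have := mul_pos (mul_pos (by omega : (0:ℤ) < (Fintype.card (V p) : ℤ) - 1)
      (by omega : (0:ℤ) < (Fintype.card (V q) : ℤ) - 1)) (by omega : (0:ℤ) < (cdist p q : ℤ))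
    exact this
  rcases le_or_gt 0 S with hSpos | hSneg
  · have h0 : (wienerIndex (moveBranch T r p q) : ℤ) < wienerIndex (cycleTrees T r) := by
      have hnn : 0 ≤ ((Fintype.card (V q) : ℤ) - 1) * S := mul_nonneg (by omega) hSpos
      linarith [heq1, hA, hnn]
    have : wienerIndex (moveBranch T r p q) < wienerIndex (cycleTrees T r) := by
      exact_mod_cast h0
    exact lt_of_le_of_lt (min_le_left _ _) this
  · have h0 : (wienerIndex (moveBranch T r q p) : ℤ) < wienerIndex (cycleTrees T r) := by
      have hneg : ((Fintype.card (V p) : ℤ) - 1) * S < 0 :=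
        mul_neg_of_pos_of_neg (by omega) hSneg
      linarith [heq2, hA, hneg]
    have : wienerIndex (moveBranch T r q p) < wienerIndex (cycleTrees T r) := by
      exact_mod_cast h0
    exact lt_of_le_of_lt (min_le_right _ _) this

end Final

/-- Lemma 2.8: with `G₁` obtained by moving branch `T q` onto `u_p` and `G₂` obtained by
moving branch `T p` onto `u_q`, the differences `W(G) − W(G₁)` and `W(G) − W(G₂)` are given
by explicit formulas, and consequently `W(G) > min{W(G₁), W(G₂)}`. -/
theorem wiener_moveBranch {g : ℕ} [NeZero g] (hg : 3 ≤ g) {V : Fin g → Type*}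
    [∀ i, Fintype (V i)] (T : ∀ i, SimpleGraph (V i)) (r : ∀ i, V i)
    (hT : ∀ i, (T i).IsTree) (p q : Fin g) (hpq : p ≠ q)
    (hp : 2 ≤ Fintype.card (V p)) (hq : 2 ≤ Fintype.card (V q)) :
    (wienerIndex (cycleTrees T r) : ℤ) - wienerIndex (moveBranch T r p q) =
        ((Fintype.card (V p) : ℤ) - 1) * ((Fintype.card (V q) : ℤ) - 1) *
          (cycleTrees T r).dist ⟨p, r p⟩ ⟨q, r q⟩ +
        ((Fintype.card (V q) : ℤ) - 1) *
          ∑ i ∈ Finset.univ.filter (fun i => i ≠ p ∧ i ≠ q),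
            (Fintype.card (V i) : ℤ) *
              (((cycleTrees T r).dist ⟨q, r q⟩ ⟨i, r i⟩ : ℤ) -
                (cycleTrees T r).dist ⟨p, r p⟩ ⟨i, r i⟩) ∧
      (wienerIndex (cycleTrees T r) : ℤ) - wienerIndex (moveBranch T r q p) =
        ((Fintype.card (V p) : ℤ) - 1) * ((Fintype.card (V q) : ℤ) - 1) *
          (cycleTrees T r).dist ⟨p, r p⟩ ⟨q, r q⟩ -
        ((Fintype.card (V p) : ℤ) - 1) *
          ∑ i ∈ Finset.univ.filter (fun i => i ≠ p ∧ i ≠ q),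
            (Fintype.card (V i) : ℤ) *
              (((cycleTrees T r).dist ⟨q, r q⟩ ⟨i, r i⟩ : ℤ) -
                (cycleTrees T r).dist ⟨p, r p⟩ ⟨i, r i⟩) ∧
      min (wienerIndex (moveBranch T r p q)) (wienerIndex (moveBranch T r q p)) <
        wienerIndex (cycleTrees T r) := by
  exact wiener_moveBranch' T r hg hT p q hpq hp hq
end

section
/- For g odd and n ≥ 2β ≥ 3g, moving one pendant vertex: W(U(T*_{a₁,0}, T*_{0,0},…,T*_{0,0})) > W(U(T*_{a₁−1,2}, T*_{0,0},…,T*_{0,0})), where both graphs have order n = 2a₁ + g (resp. 2(a₁−1)+2+g) and the same matching number. -/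
open SimpleGraph Finset

/-- The rooted tree `T*_{a,b}` of order `2a+b+1`: from the star `K_{1,a+b}` with root
(center) vertex `0` and leaves `1,…,a+b`, attach a pendant vertex `i+a+b` to leaf `i` for
`1 ≤ i ≤ a`. -/
def Tstar (a b : ℕ) : SimpleGraph (Fin (2*a+b+1)) :=
  SimpleGraph.fromRel fun u v =>
    (u.val = 0 ∧ 1 ≤ v.val ∧ v.val ≤ a + b) ∨
    (1 ≤ u.val ∧ u.val ≤ a ∧ v.val = u.val + a + b)

/-- The one-point union (wedge) of `G₁` and `G₂` obtained by identifying the vertex `x` of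
`G₁` with the vertex `y` of `G₂`. -/
def wedge {V₁ V₂ : Type*} (G₁ : SimpleGraph V₁) (G₂ : SimpleGraph V₂) (x : V₁) (y : V₂) :
    SimpleGraph {v : V₁ ⊕ V₂ // v ≠ Sum.inr y} :=
  SimpleGraph.fromRel fun u v =>
    (∃ a b : V₁, u.val = Sum.inl a ∧ v.val = Sum.inl b ∧ G₁.Adj a b) ∨
    (∃ a b : V₂, u.val = Sum.inr a ∧ v.val = Sum.inr b ∧ G₂.Adj a b) ∨
    (∃ b : V₂, u.val = Sum.inl x ∧ v.val = Sum.inr b ∧ G₂.Adj y b)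

section cert

lemma walk_lower_s16 {V : Type*} {G : SimpleGraph V} (D : V → ℕ)
    (hlip : ∀ x y, G.Adj x y → D y ≤ D x + 1) :
    ∀ {x v : V} (p : G.Walk x v), D v ≤ D x + p.length := by
  intro x v p
  induction p with
  | nil => simp
  | @cons x' y' v' h q ih =>
    have := hlip _ _ h
    simp only [SimpleGraph.Walk.length_cons]
    omega

lemma exists_walk_cert {V : Type*} {G : SimpleGraph V} (u : V) (D : V → ℕ)
    (h0' : ∀ v, D v = 0 → v = u)
    (hdesc : ∀ v, D v ≠ 0 → ∃ w, G.Adj w v ∧ D w + 1 = D v) :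
    ∀ (n : ℕ) (v : V), D v = n → ∃ p : G.Walk u v, p.length = n := by
  intro n
  induction n with
  | zero => intro v hv; exact (h0' v hv) ▸ ⟨SimpleGraph.Walk.nil, rfl⟩
  | succ n ih =>
    intro v hv
    obtain ⟨w, hadj, hw⟩ := hdesc v (by omega)
    obtain ⟨p, hp⟩ := ih w (by omega)
    exact ⟨p.concat hadj, by simp [SimpleGraph.Walk.length_concat, hp]⟩

lemma dist_eq_cert {V : Type*} {G : SimpleGraph V} (u : V) (D : V → ℕ)
    (h0 : D u = 0)
    (h0' : ∀ v, D v = 0 → v = u)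
    (hlip : ∀ x y, G.Adj x y → D y ≤ D x + 1)
    (hdesc : ∀ v, D v ≠ 0 → ∃ w, G.Adj w v ∧ D w + 1 = D v) :
    ∀ v, G.dist u v = D v := by
  intro v
  obtain ⟨p, hp⟩ := exists_walk_cert u D h0' hdesc (D v) v rfl
  have h1 : G.dist u v ≤ D v := hp ▸ SimpleGraph.dist_le p
  have hr : G.Reachable u v := ⟨p⟩
  obtain ⟨q, hq⟩ := hr.exists_walk_length_eq_dist
  have h2 := walk_lower_s16 D hlip q
  omega

end cert

section numeric
def dC (g x y : ℕ) : ℕ := min ((x - y) + (y - x)) (g - ((x - y) + (y - x)))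

def legT (a b x : ℕ) : ℕ := if x ≤ a + b then x else x - (a + b)

def depT (a b x : ℕ) : ℕ := if x = 0 then 0 else if x ≤ a + b then 1 else 2

def dT (a b x y : ℕ) : ℕ :=
  if legT a b x = legT a b y then (depT a b x - depT a b y) + (depT a b y - depT a b x)
  else depT a b x + depT a b y

lemma dC_lip (g x y z : ℕ) (hx : x < g) (hy : y < g) (hz : z < g)
    (h : y + 1 = z ∨ z + 1 = y ∨ (y = 0 ∧ z = g - 1) ∨ (z = 0 ∧ y = g - 1)) :
    dC g x z ≤ dC g x y + 1 := by
  simp only [dC, Nat.min_def]; split_ifs <;> omega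

lemma dC_desc (g x y : ℕ) (hg : 3 ≤ g) (hx : x < g) (hy : y < g) (h : dC g x y ≠ 0) :
    (y + 1 < g ∧ dC g x (y+1) + 1 = dC g x y) ∨ (1 ≤ y ∧ dC g x (y-1) + 1 = dC g x y) ∨
    (y = g - 1 ∧ dC g x 0 + 1 = dC g x y) ∨ (y = 0 ∧ dC g x (g-1) + 1 = dC g x y) := by
  simp only [dC, Nat.min_def] at h ⊢
  rcases Nat.lt_trichotomy x y with hxy | hxy | hxy
  · by_cases h2 : 2*(y-x) ≤ g
    · right; left; split_ifs at h ⊢ <;> omega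
    · by_cases h3 : y + 1 < g
      · left; split_ifs at h ⊢ <;> omega
      · right; right; left; split_ifs at h ⊢ <;> omega
  · split_ifs at h <;> omega
  · by_cases h2 : 2*(x-y) ≤ g
    · left; split_ifs at h ⊢ <;> omega
    · by_cases h3 : 1 ≤ y
      · right; left; split_ifs at h ⊢ <;> omega
      · right; right; right; split_ifs at h ⊢ <;> omega

lemma dC_comm (g x y : ℕ) : dC g x y = dC g y x := by simp only [dC]; omega

lemma dC_self (g x : ℕ) : dC g x x = 0 := by simp only [dC]; omega

lemma dC_eq_zero (g x y : ℕ) (hx : x < g) (hy : y < g) (h : dC g x y = 0) : x = y := by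
  simp only [dC] at h; omega

lemma dT_lip (a b x y w : ℕ) (hx : x ≤ 2*a+b) (hy : y ≤ 2*a+b) (hw : w ≤ 2*a+b)
    (h : (x = 0 ∧ 1 ≤ y ∧ y ≤ a + b) ∨ (1 ≤ x ∧ x ≤ a ∧ y = x + a + b) ∨
         (y = 0 ∧ 1 ≤ x ∧ x ≤ a + b) ∨ (1 ≤ y ∧ y ≤ a ∧ x = y + a + b)) :
    dT a b w y ≤ dT a b w x + 1 := by
  unfold dT legT depT; split_ifs <;> omega

lemma dT_self (a b x : ℕ) : dT a b x x = 0 := by unfold dT; simp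

lemma dT_eq_zero (a b x y : ℕ) (hx : x ≤ 2*a+b) (hy : y ≤ 2*a+b) (h : dT a b x y = 0) :
    x = y := by
  unfold dT legT depT at h; split_ifs at h <;> omega

-- tree descent
set_option maxHeartbeats 2000000 in
lemma dT_desc (a b w t : ℕ) (hw : 1 ≤ w) (hw2 : w ≤ 2*a+b) (ht : 1 ≤ t) (ht2 : t ≤ 2*a+b)
    (h : dT a b w t ≠ 0) :
    (1 ≤ t ∧ t ≤ a ∧ w = t + a + b ∧ dT a b w t = 1) ∨
    (1 ≤ w ∧ w ≤ a ∧ t = w + a + b ∧ dT a b w t = 1) ∨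
    (a + b < t ∧ 1 ≤ t - (a+b) ∧ t - (a+b) ≤ a ∧ t = (t - (a+b)) + a + b ∧
      dT a b w (t-(a+b)) + 1 = dT a b w t) ∨
    (t ≤ a + b ∧ depT a b w + 1 = dT a b w t) := by
  by_cases hta : a + b < t
  · by_cases hsame : w = t - (a+b)
    · right; left
      unfold dT legT depT at h ⊢; split_ifs at h ⊢ <;> omega
    · right; right; left
      unfold dT legT depT at h ⊢; split_ifs at h ⊢ <;> omega
  · by_cases hsame : w = t + a + b
    · left
      unfold dT legT depT at h ⊢; split_ifs at h ⊢ <;> omega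
    · right; right; right
      unfold dT legT depT at h ⊢; split_ifs at h ⊢ <;> omega

lemma dT_zero_right (a b s : ℕ) (hs : s ≤ 2*a+b) : dT a b s 0 = depT a b s := by
  unfold dT legT depT; split_ifs <;> omega

lemma dT_leg (a b s : ℕ) (hs : 1 ≤ s) (hs2 : s ≤ 2*a+b) :
    dT a b s (legT a b s) + 1 = depT a b s := by
  unfold dT legT depT; split_ifs <;> omega

lemma legT_bounds (a b s : ℕ) (hs : 1 ≤ s) (hs2 : s ≤ 2*a+b) :
    1 ≤ legT a b s ∧ legT a b s ≤ a + b := by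
  unfold legT; split_ifs <;> omega

lemma depT_le_two (a b s : ℕ) : depT a b s ≤ 2 := by unfold depT; split_ifs <;> omega

lemma depT_pos (a b s : ℕ) (hs : 1 ≤ s) : 1 ≤ depT a b s := by
  unfold depT; split_ifs <;> omega

lemma depT_eq_one (a b s : ℕ) (h1 : 1 ≤ s) (h2 : s ≤ a + b) : depT a b s = 1 := by
  unfold depT; split_ifs <;> omega

lemma depT_eq_two (a b s : ℕ) (h2 : a + b < s) : depT a b s = 2 := by
  unfold depT; split_ifs <;> omega

end numeric

section adj

lemma mod_helper (g x y : ℕ) (hx : x < g) (hy : y < g) :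
    ((g - y) + x) % g = if y ≤ x then x - y else x + g - y := by
  rcases le_or_gt y x with h | h
  · have e : (g - y) + x = g + (x - y) := by omega
    rw [e, Nat.add_mod_left, Nat.mod_eq_of_lt (by omega), if_pos h]
  · rw [Nat.mod_eq_of_lt (by omega), if_neg (by omega)]
    omega

lemma cyc_adj {g : ℕ} (hg : 3 ≤ g) (u v : Fin g) :
    (SimpleGraph.cycleGraph g).Adj u v ↔
      (u.val + 1 = v.val ∨ v.val + 1 = u.val ∨
       (u.val = 0 ∧ v.val = g - 1) ∨ (v.val = 0 ∧ u.val = g - 1)) := by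
  rw [SimpleGraph.cycleGraph_adj']
  rw [Fin.sub_def, Fin.sub_def]
  simp only []
  rw [mod_helper g u.val v.val u.isLt v.isLt, mod_helper g v.val u.val v.isLt u.isLt]
  have := u.isLt; have := v.isLt
  split_ifs <;> omega

lemma Tstar_adj {a b : ℕ} (s t : Fin (2*a+b+1)) :
    (Tstar a b).Adj s t ↔ s.val ≠ t.val ∧
      ((s.val = 0 ∧ 1 ≤ t.val ∧ t.val ≤ a + b) ∨ (1 ≤ s.val ∧ s.val ≤ a ∧ t.val = s.val + a + b) ∨
       (t.val = 0 ∧ 1 ≤ s.val ∧ s.val ≤ a + b) ∨ (1 ≤ t.val ∧ t.val ≤ a ∧ s.val = t.val + a + b)) := by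
  simp only [Tstar, SimpleGraph.fromRel_adj, Ne, Fin.ext_iff]
  tauto

variable {V₁ V₂ : Type*} {G₁ : SimpleGraph V₁} {G₂ : SimpleGraph V₂} {x : V₁} {y : V₂}

lemma wedge_adj_ll (i j : V₁) (hi hj) :
    (wedge G₁ G₂ x y).Adj ⟨Sum.inl i, hi⟩ ⟨Sum.inl j, hj⟩ ↔ G₁.Adj i j := by
  simp only [wedge, SimpleGraph.fromRel_adj, Subtype.mk.injEq]
  constructor
  · rintro ⟨hne, h⟩
    rcases h with (⟨a,b,ha,hb,hab⟩|⟨a,b,ha,hb,hab⟩|⟨b,ha,hb,hab⟩)|(⟨a,b,ha,hb,hab⟩|⟨a,b,ha,hb,hab⟩|⟨b,ha,hb,hab⟩) <;>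
      simp_all
    exact hab.symm
  · intro h
    exact ⟨by simp [h.ne], Or.inl (Or.inl ⟨i, j, rfl, rfl, h⟩)⟩

lemma wedge_adj_lr (i : V₁) (t : V₂) (hi ht) :
    (wedge G₁ G₂ x y).Adj ⟨Sum.inl i, hi⟩ ⟨Sum.inr t, ht⟩ ↔ i = x ∧ G₂.Adj y t := by
  simp only [wedge, SimpleGraph.fromRel_adj, Subtype.mk.injEq]
  constructor
  · rintro ⟨hne, h⟩
    rcases h with (⟨a,b,ha,hb,hab⟩|⟨a,b,ha,hb,hab⟩|⟨b,ha,hb,hab⟩)|(⟨a,b,ha,hb,hab⟩|⟨a,b,ha,hb,hab⟩|⟨b,ha,hb,hab⟩) <;>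
      simp_all
  · rintro ⟨rfl, h⟩
    exact ⟨by simp, Or.inl (Or.inr (Or.inr ⟨t, rfl, rfl, h⟩))⟩

lemma wedge_adj_rr (s t : V₂) (hs ht) :
    (wedge G₁ G₂ x y).Adj ⟨Sum.inr s, hs⟩ ⟨Sum.inr t, ht⟩ ↔ G₂.Adj s t := by
  simp only [wedge, SimpleGraph.fromRel_adj, Subtype.mk.injEq]
  constructor
  · rintro ⟨hne, h⟩
    rcases h with (⟨a,b,ha,hb,hab⟩|⟨a,b,ha,hb,hab⟩|⟨b,ha,hb,hab⟩)|(⟨a,b,ha,hb,hab⟩|⟨a,b,ha,hb,hab⟩|⟨b,ha,hb,hab⟩) <;>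
      simp_all
    exact hab.symm
  · intro h
    exact ⟨by simp [h.ne], Or.inl (Or.inr (Or.inl ⟨s, t, rfl, rfl, h⟩))⟩

lemma wedge_adj_rl (s : V₂) (j : V₁) (hs hj) :
    (wedge G₁ G₂ x y).Adj ⟨Sum.inr s, hs⟩ ⟨Sum.inl j, hj⟩ ↔ j = x ∧ G₂.Adj y s :=
  ⟨fun h => (wedge_adj_lr j s hj hs).mp h.symm, fun h => ((wedge_adj_lr j s hj hs).mpr h).symm⟩

end adj

def DD (g a b : ℕ) : (Fin g ⊕ Fin (2*a+b+1)) → (Fin g ⊕ Fin (2*a+b+1)) → ℕ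
  | Sum.inl i, Sum.inl j => dC g i.val j.val
  | Sum.inl i, Sum.inr t => dC g i.val 0 + depT a b t.val
  | Sum.inr s, Sum.inl j => dC g j.val 0 + depT a b s.val
  | Sum.inr s, Sum.inr t => dT a b s.val t.val

set_option maxHeartbeats 1000000 in
lemma wedge_dist (g a b : ℕ) [NeZero g] (hg : 3 ≤ g) (y₀ : Fin (2*a+b+1)) (hy : y₀.val = 0)
    (u v : {w : Fin g ⊕ Fin (2*a+b+1) // w ≠ Sum.inr y₀}) :
    (wedge (SimpleGraph.cycleGraph g) (Tstar a b) 0 y₀).dist u v = DD g a b u.1 v.1 := by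
  have hg0 : 0 < g := by omega
  have hM : ∀ t : Fin (2*a+b+1), t.val ≤ 2*a+b := fun t => by have := t.isLt; omega
  have hne0 : ∀ t : Fin (2*a+b+1), Sum.inr t ≠ (Sum.inr y₀ : Fin g ⊕ Fin (2*a+b+1)) → t.val ≠ 0 := by
    intro t h h0
    exact h (congrArg Sum.inr (Fin.ext (by omega)))
  refine dist_eq_cert u (fun w => DD g a b u.1 w.1) ?_ ?_ ?_ ?_ v
  · -- D u = 0
    obtain ⟨u', hu⟩ := u
    rcases u' with i | s <;> simp [DD, dC_self, dT_self]
  · -- D w = 0 → w = u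
    obtain ⟨u', hu⟩ := u
    rintro ⟨w', hw⟩ h
    apply Subtype.ext
    rcases u' with i | s <;> rcases w' with j | t <;> simp only [DD] at h ⊢
    · have e := dC_eq_zero g i.val j.val i.isLt j.isLt h
      exact congrArg Sum.inl (Fin.ext e.symm)
    · have h1 := depT_pos a b t.val (by have := hne0 t hw; omega)
      omega
    · have h1 := depT_pos a b s.val (by have := hne0 s hu; omega)
      omega
    · have e := dT_eq_zero a b s.val t.val (hM s) (hM t) h
      exact congrArg Sum.inr (Fin.ext e.symm)
  · -- Lipschitz
    obtain ⟨u', hu⟩ := u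
    rintro ⟨p', hp⟩ ⟨q', hq⟩ hadj
    rcases p' with i | s <;> rcases q' with j | t
    · rw [wedge_adj_ll, cyc_adj hg] at hadj
      rcases u' with k | s0 <;> simp only [DD]
      · exact dC_lip g k.val i.val j.val k.isLt i.isLt j.isLt hadj
      · have e1 := dC_comm g j.val 0
        have e2 := dC_comm g i.val 0
        have := dC_lip g 0 i.val j.val hg0 i.isLt j.isLt hadj
        omega
    · rw [wedge_adj_lr] at hadj
      obtain ⟨rfl, ht⟩ := hadj
      rw [Tstar_adj] at ht
      rw [hy] at ht
      have hl1 : 1 ≤ t.val := by omega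
      have hl2 : t.val ≤ a + b := by omega
      have hd1 := depT_eq_one a b t.val hl1 hl2
      rcases u' with k | s0 <;> simp only [DD, Fin.val_zero]
      · omega
      · have h1 := dT_lip a b 0 t.val s0.val (by omega) (hM t) (hM s0) (Or.inl ⟨rfl, hl1, hl2⟩)
        have h2 := dT_zero_right a b s0.val (hM s0)
        have h3 := dC_self g 0
        omega
    · rw [wedge_adj_rl] at hadj
      obtain ⟨rfl, hs⟩ := hadj
      rw [Tstar_adj] at hs
      rw [hy] at hs
      have hl1 : 1 ≤ s.val := by omega
      have hl2 : s.val ≤ a + b := by omega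
      rcases u' with k | s0 <;> simp only [DD, Fin.val_zero]
      · have := depT_pos a b s.val hl1
        omega
      · have h1 := dT_lip a b s.val 0 s0.val (hM s) (by omega) (hM s0)
          (Or.inr (Or.inr (Or.inl ⟨rfl, hl1, hl2⟩)))
        have h2 := dT_zero_right a b s0.val (hM s0)
        have h3 := dC_self g 0
        omega
    · rw [wedge_adj_rr, Tstar_adj] at hadj
      obtain ⟨hne, hcase⟩ := hadj
      rcases u' with k | s0 <;> simp only [DD]
      · unfold depT
        split_ifs <;> omega
      · exact dT_lip a b s.val t.val s0.val (hM s) (hM t) (hM s0) hcase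
  · -- descent
    obtain ⟨u', hu⟩ := u
    rintro ⟨q', hq⟩ h
    rcases u' with k | s
    · rcases q' with j | t
      · -- cycle target
        simp only [DD] at h ⊢
        rcases dC_desc g k.val j.val hg k.isLt j.isLt h with ⟨h1, h2⟩ | ⟨h1, h2⟩ | ⟨h1, h2⟩ | ⟨h1, h2⟩
        · refine ⟨⟨Sum.inl ⟨j.val + 1, h1⟩, by simp⟩, ?_, ?_⟩
          · rw [wedge_adj_ll, cyc_adj hg]
            right; left; exact rfl
          · exact h2
        · refine ⟨⟨Sum.inl ⟨j.val - 1, by omega⟩, by simp⟩, ?_, ?_⟩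
          · rw [wedge_adj_ll, cyc_adj hg]
            left; simp only []; omega
          · exact h2
        · refine ⟨⟨Sum.inl ⟨0, by omega⟩, Sum.inl_ne_inr⟩, ?_, ?_⟩
          · rw [wedge_adj_ll, cyc_adj hg]
            right; right; left; exact ⟨rfl, h1⟩
          · exact h2
        · refine ⟨⟨Sum.inl ⟨g - 1, by omega⟩, by simp⟩, ?_, ?_⟩
          · rw [wedge_adj_ll, cyc_adj hg]
            right; right; right; exact ⟨h1, rfl⟩
          · exact h2
      · -- tree target from cycle base
        simp only [DD] at h ⊢
        have ht0 : t.val ≠ 0 := hne0 t hq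
        by_cases htb : t.val ≤ a + b
        · refine ⟨⟨Sum.inl ⟨0, by omega⟩, Sum.inl_ne_inr⟩, ?_, ?_⟩
          · rw [wedge_adj_lr]
            refine ⟨Fin.ext (by simp), ?_⟩
            rw [Tstar_adj, hy]
            exact ⟨by omega, Or.inl ⟨rfl, by omega, htb⟩⟩
          · simp only [DD]
            have := depT_eq_one a b t.val (by omega) htb
            omega
        · have hab : a + b < t.val := by omega
          have htM := hM t
          refine ⟨⟨Sum.inr ⟨t.val - (a+b), by omega⟩, ?_⟩, ?_, ?_⟩
          · intro hc
            rw [Sum.inr.injEq] at hc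
            have := congrArg Fin.val hc
            simp only [hy] at this
            omega
          · rw [wedge_adj_rr, Tstar_adj]
            refine ⟨by simp only []; omega, ?_⟩
            right; left
            simp only []
            omega
          · simp only [DD]
            have e1 := depT_eq_one a b (t.val - (a+b)) (by omega) (by omega)
            have e2 := depT_eq_two a b t.val hab
            omega
    · rcases q' with j | t
      · -- cycle target from tree base
        simp only [DD] at h ⊢
        by_cases hj0 : j.val = 0
        · -- q is the root; move from root towards s along the tree
          have hs0 : s.val ≠ 0 := hne0 s hu
          have hdj : dC g j.val 0 = 0 := by simp only [dC]; omega
          obtain ⟨hL1, hL2⟩ := legT_bounds a b s.val (by omega) (hM s)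
          refine ⟨⟨Sum.inr ⟨legT a b s.val, by omega⟩, ?_⟩, ?_, ?_⟩
          · intro hc
            rw [Sum.inr.injEq] at hc
            have := congrArg Fin.val hc
            simp only [hy] at this
            omega
          · rw [wedge_adj_rl, Tstar_adj, hy]
            refine ⟨Fin.ext (by rw [Fin.val_zero]; omega), ?_, Or.inl ⟨rfl, ?_, ?_⟩⟩ <;>
              · simp only []
                omega
          · simp only [DD]
            have e := dT_leg a b s.val (by omega) (hM s)
            omega
        · have hdj : dC g j.val 0 ≠ 0 := by simp only [dC]; have := j.isLt; omega
          have hcm := dC_comm g j.val 0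
          rcases dC_desc g 0 j.val hg hg0 j.isLt (by omega) with ⟨h1, h2⟩ | ⟨h1, h2⟩ | ⟨h1, h2⟩ | ⟨h1, h2⟩
          · refine ⟨⟨Sum.inl ⟨j.val + 1, h1⟩, by simp⟩, ?_, ?_⟩
            · rw [wedge_adj_ll, cyc_adj hg]
              right; left; exact rfl
            · simp only [DD]
              have := dC_comm g (j.val + 1) 0
              omega
          · refine ⟨⟨Sum.inl ⟨j.val - 1, by omega⟩, by simp⟩, ?_, ?_⟩
            · rw [wedge_adj_ll, cyc_adj hg]
              left; simp only []; omega
            · simp only [DD]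
              have := dC_comm g (j.val - 1) 0
              omega
          · refine ⟨⟨Sum.inl ⟨0, by omega⟩, Sum.inl_ne_inr⟩, ?_, ?_⟩
            · rw [wedge_adj_ll, cyc_adj hg]
              right; right; left; exact ⟨rfl, h1⟩
            · simp only [DD]
              have := dC_comm g 0 0
              omega
          · omega
      · -- tree target from tree base
        simp only [DD] at h ⊢
        have hs0 : s.val ≠ 0 := hne0 s hu
        have ht0 : t.val ≠ 0 := hne0 t hq
        rcases dT_desc a b s.val t.val (by omega) (hM s) (by omega) (hM t) h with
          ⟨h1, h2, h3, h4⟩ | ⟨h1, h2, h3, h4⟩ | ⟨h1, h2, h3, h4, h5⟩ | ⟨h1, h2⟩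
        · refine ⟨⟨Sum.inr s, hu⟩, ?_, ?_⟩
          · rw [wedge_adj_rr, Tstar_adj]
            exact ⟨by omega, Or.inr (Or.inr (Or.inr ⟨h1, h2, h3⟩))⟩
          · simp only [DD]
            rw [dT_self]
            omega
        · refine ⟨⟨Sum.inr s, hu⟩, ?_, ?_⟩
          · rw [wedge_adj_rr, Tstar_adj]
            exact ⟨by omega, Or.inr (Or.inl ⟨h1, h2, h3⟩)⟩
          · simp only [DD]
            rw [dT_self]
            omega
        · refine ⟨⟨Sum.inr ⟨t.val - (a+b), by omega⟩, ?_⟩, ?_, ?_⟩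
          · intro hc
            rw [Sum.inr.injEq] at hc
            have := congrArg Fin.val hc
            simp only [hy] at this
            omega
          · rw [wedge_adj_rr, Tstar_adj]
            refine ⟨by simp only []; omega, ?_⟩
            right; left
            simp only []
            omega
          · simp only [DD]
            exact h5
        · refine ⟨⟨Sum.inl ⟨0, by omega⟩, Sum.inl_ne_inr⟩, ?_, ?_⟩
          · rw [wedge_adj_lr]
            refine ⟨Fin.ext (by simp), ?_⟩
            rw [Tstar_adj, hy]
            exact ⟨by omega, Or.inl ⟨rfl, by omega, h1⟩⟩
          · simp only [DD]
            have e := dC_self g 0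
            omega

def treeSum (a b : ℕ) : ℕ :=
  ∑ x ∈ Finset.Ico 1 (2*a+b+1), ∑ y ∈ Finset.Ico 1 (2*a+b+1), dT a b x y

lemma depSum_eq (a b : ℕ) : ∑ x ∈ Finset.Ico 1 (2*a+b+1), depT a b x = 3*a+b := by
  rw [← Finset.sum_Ico_consecutive _ (by omega : 1 ≤ a+b+1) (by omega : a+b+1 ≤ 2*a+b+1)]
  have e1 : ∑ x ∈ Finset.Ico 1 (a+b+1), depT a b x = ∑ _x ∈ Finset.Ico 1 (a+b+1), 1 :=
    Finset.sum_congr rfl fun x hx => by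
      rw [Finset.mem_Ico] at hx
      exact depT_eq_one a b x (by omega) (by omega)
  have e2 : ∑ x ∈ Finset.Ico (a+b+1) (2*a+b+1), depT a b x
      = ∑ _x ∈ Finset.Ico (a+b+1) (2*a+b+1), 2 :=
    Finset.sum_congr rfl fun x hx => by
      rw [Finset.mem_Ico] at hx
      exact depT_eq_two a b x (by omega)
  rw [e1, e2, Finset.sum_const, Finset.sum_const, Nat.card_Ico, Nat.card_Ico,
    smul_eq_mul, smul_eq_mul]
  omega

lemma indSum_le (a b c : ℕ) (h : c ≤ 2*a+b) :
    ∑ x ∈ Finset.Ico 1 (2*a+b+1), (if x ≤ c then 2 else 0) = 2*c := by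
  rw [← Finset.sum_Ico_consecutive _ (by omega : 1 ≤ c+1) (by omega : c+1 ≤ 2*a+b+1)]
  have e1 : ∑ x ∈ Finset.Ico 1 (c+1), (if x ≤ c then 2 else 0)
      = ∑ _x ∈ Finset.Ico 1 (c+1), 2 :=
    Finset.sum_congr rfl fun x hx => by
      rw [Finset.mem_Ico] at hx
      rw [if_pos (by omega)]
  have e2 : ∑ x ∈ Finset.Ico (c+1) (2*a+b+1), (if x ≤ c then 2 else 0)
      = ∑ _x ∈ Finset.Ico (c+1) (2*a+b+1), 0 :=
    Finset.sum_congr rfl fun x hx => by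
      rw [Finset.mem_Ico] at hx
      rw [if_neg (by omega)]
  rw [e1, e2, Finset.sum_const, Finset.sum_const, Nat.card_Ico, Nat.card_Ico,
    smul_eq_mul, smul_eq_mul]
  omega

lemma indSum_gt (a b c : ℕ) (h : c ≤ 2*a+b) :
    ∑ x ∈ Finset.Ico 1 (2*a+b+1), (if c < x then 2 else 0) = 2*(2*a+b-c) := by
  rw [← Finset.sum_Ico_consecutive _ (by omega : 1 ≤ c+1) (by omega : c+1 ≤ 2*a+b+1)]
  have e1 : ∑ x ∈ Finset.Ico 1 (c+1), (if c < x then 2 else 0)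
      = ∑ _x ∈ Finset.Ico 1 (c+1), 0 :=
    Finset.sum_congr rfl fun x hx => by
      rw [Finset.mem_Ico] at hx
      rw [if_neg (by omega)]
  have e2 : ∑ x ∈ Finset.Ico (c+1) (2*a+b+1), (if c < x then 2 else 0)
      = ∑ _x ∈ Finset.Ico (c+1) (2*a+b+1), 2 :=
    Finset.sum_congr rfl fun x hx => by
      rw [Finset.mem_Ico] at hx
      rw [if_pos (by omega)]
  rw [e1, e2, Finset.sum_const, Finset.sum_const, Nat.card_Ico, Nat.card_Ico,
    smul_eq_mul, smul_eq_mul]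
  omega

set_option maxHeartbeats 4000000 in
lemma treeSum_eq (a b : ℕ) :
    treeSum a b + 2*(3*a+b) + 4*a = 2*(2*a+b)*(3*a+b) := by
  have key : ∀ x ∈ Finset.Ico 1 (2*a+b+1), ∀ y ∈ Finset.Ico 1 (2*a+b+1),
      dT a b x y + ((if y = x then 2*depT a b x else 0)
        + (if y = x + (a+b) then (if x ≤ a then 2 else 0) else 0)
        + (if y = x - (a+b) then (if a+b < x then 2 else 0) else 0))
      = depT a b x + depT a b y := by
    intro x hx y hy
    rw [Finset.mem_Ico] at hx hy
    unfold dT legT depT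
    split_ifs <;> omega
  have hsum : ∑ x ∈ Finset.Ico 1 (2*a+b+1), ∑ y ∈ Finset.Ico 1 (2*a+b+1),
      (dT a b x y + ((if y = x then 2*depT a b x else 0)
        + (if y = x + (a+b) then (if x ≤ a then 2 else 0) else 0)
        + (if y = x - (a+b) then (if a+b < x then 2 else 0) else 0)))
      = ∑ x ∈ Finset.Ico 1 (2*a+b+1), ∑ y ∈ Finset.Ico 1 (2*a+b+1),
        (depT a b x + depT a b y) :=
    Finset.sum_congr rfl fun x hx => Finset.sum_congr rfl fun y hy => key x hx y hy
  -- RHS value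
  have hrhs : ∑ x ∈ Finset.Ico 1 (2*a+b+1), ∑ y ∈ Finset.Ico 1 (2*a+b+1),
      (depT a b x + depT a b y) = 2*(2*a+b)*(3*a+b) := by
    have : ∀ x ∈ Finset.Ico 1 (2*a+b+1), ∑ y ∈ Finset.Ico 1 (2*a+b+1),
        (depT a b x + depT a b y) = (2*a+b) * depT a b x + (3*a+b) := by
      intro x hx
      rw [Finset.sum_add_distrib, Finset.sum_const, Nat.card_Ico, depSum_eq, smul_eq_mul,
        Nat.add_sub_cancel]
    rw [Finset.sum_congr rfl this, Finset.sum_add_distrib, Finset.sum_const, Nat.card_Ico,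
      ← Finset.mul_sum, depSum_eq, smul_eq_mul, Nat.add_sub_cancel]
    ring
  -- LHS value
  have hlhs : ∑ x ∈ Finset.Ico 1 (2*a+b+1), ∑ y ∈ Finset.Ico 1 (2*a+b+1),
      (dT a b x y + ((if y = x then 2*depT a b x else 0)
        + (if y = x + (a+b) then (if x ≤ a then 2 else 0) else 0)
        + (if y = x - (a+b) then (if a+b < x then 2 else 0) else 0)))
      = treeSum a b + (2*(3*a+b) + 2*a + 2*a) := by
    have inner : ∀ x ∈ Finset.Ico 1 (2*a+b+1), ∑ y ∈ Finset.Ico 1 (2*a+b+1),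
        (dT a b x y + ((if y = x then 2*depT a b x else 0)
          + (if y = x + (a+b) then (if x ≤ a then 2 else 0) else 0)
          + (if y = x - (a+b) then (if a+b < x then 2 else 0) else 0)))
        = (∑ y ∈ Finset.Ico 1 (2*a+b+1), dT a b x y) + (2*depT a b x
          + (if x ≤ a then 2 else 0) + (if a+b < x then 2 else 0)) := by
      intro x hx
      rw [Finset.mem_Ico] at hx
      rw [Finset.sum_add_distrib]
      congr 1
      rw [Finset.sum_add_distrib, Finset.sum_add_distrib]
      rw [Finset.sum_ite_eq' (Finset.Ico 1 (2*a+b+1)) x (fun _ => 2*depT a b x)]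
      rw [Finset.sum_ite_eq' (Finset.Ico 1 (2*a+b+1)) (x+(a+b)) (fun _ => if x ≤ a then 2 else 0)]
      rw [Finset.sum_ite_eq' (Finset.Ico 1 (2*a+b+1)) (x-(a+b)) (fun _ => if a+b < x then 2 else 0)]
      rw [if_pos (by rw [Finset.mem_Ico]; omega)]
      have e2 : (if x+(a+b) ∈ Finset.Ico 1 (2*a+b+1) then (if x ≤ a then 2 else 0) else 0)
          = (if x ≤ a then 2 else 0) := by
        by_cases hxa : x ≤ a
        · rw [if_pos (by rw [Finset.mem_Ico]; omega)]
        · rw [if_neg hxa]; simp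
      have e3 : (if x-(a+b) ∈ Finset.Ico 1 (2*a+b+1) then (if a+b < x then 2 else 0) else 0)
          = (if a+b < x then 2 else 0) := by
        by_cases hxa : a+b < x
        · rw [if_pos (by rw [Finset.mem_Ico]; omega)]
        · rw [if_neg hxa]; simp
      rw [e2, e3]
    rw [Finset.sum_congr rfl inner]
    rw [Finset.sum_add_distrib, Finset.sum_add_distrib, Finset.sum_add_distrib]
    rw [indSum_le a b a (by omega), indSum_gt a b (a+b) (by omega)]
    rw [← Finset.mul_sum, depSum_eq]
    have : 2*a+b-(a+b) = a := by omega
    rw [this]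
    rfl
  rw [hsum, hrhs] at hlhs
  omega

def eWedge (g M : ℕ) (y₀ : Fin (M+1)) (hy : y₀.val = 0) :
    (Fin g ⊕ Fin M) ≃ {w : Fin g ⊕ Fin (M+1) // w ≠ Sum.inr y₀} where
  toFun p := match p with
    | Sum.inl i => ⟨Sum.inl i, by simp⟩
    | Sum.inr j => ⟨Sum.inr ⟨j.val+1, by have := j.isLt; omega⟩, by
        intro hc
        rw [Sum.inr.injEq] at hc
        have := congrArg Fin.val hc
        simp [hy] at this⟩
  invFun w := match w with
    | ⟨Sum.inl i, _⟩ => Sum.inl i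
    | ⟨Sum.inr t, h⟩ => Sum.inr ⟨t.val - 1, by
        have ht : t.val ≠ 0 := fun h0 => h (congrArg Sum.inr (Fin.ext (by omega)))
        have := t.isLt
        omega⟩
  left_inv p := by
    rcases p with i | j
    · rfl
    · simp [Fin.ext_iff]
  right_inv w := by
    rcases w with ⟨i | t, hw⟩
    · rfl
    · have ht : t.val ≠ 0 := fun h0 => hw (congrArg Sum.inr (Fin.ext (by omega)))
      apply Subtype.ext
      simp only []
      rw [Sum.inr.injEq]
      exact Fin.ext (by simp; omega)

lemma depSum_range (a b : ℕ) : ∑ x ∈ Finset.range (2*a+b), depT a b (x+1) = 3*a+b := by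
  have h := depSum_eq a b
  rw [Finset.sum_Ico_eq_sum_range] at h
  simpa [Nat.add_sub_cancel, Nat.add_comm] using h

lemma treeSum_range (a b : ℕ) :
    ∑ x ∈ Finset.range (2*a+b), ∑ y ∈ Finset.range (2*a+b), dT a b (x+1) (y+1)
      = treeSum a b := by
  symm
  unfold treeSum
  rw [Finset.sum_Ico_eq_sum_range]
  simp only [Nat.add_sub_cancel]
  refine Finset.sum_congr rfl fun x _ => ?_
  rw [Finset.sum_Ico_eq_sum_range]
  simp only [Nat.add_sub_cancel]
  refine Finset.sum_congr rfl fun y _ => ?_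
  rw [Nat.add_comm 1 x, Nat.add_comm 1 y]

lemma wedge_sum (g a b : ℕ) [NeZero g] (hg : 3 ≤ g) (y₀ : Fin (2*a+b+1)) (hy : y₀.val = 0) :
    (∑ u, ∑ v, (wedge (SimpleGraph.cycleGraph g) (Tstar a b) 0 y₀).dist u v)
      = (∑ i : Fin g, ∑ j : Fin g, dC g i.val j.val)
        + 2 * ((2*a+b) * (∑ i : Fin g, dC g i.val 0) + g * (3*a+b)) + treeSum a b := by
  have hdist := wedge_dist g a b hg y₀ hy
  have step1 : (∑ u, ∑ v, (wedge (SimpleGraph.cycleGraph g) (Tstar a b) 0 y₀).dist u v)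
      = ∑ u : {w : Fin g ⊕ Fin (2*a+b+1) // w ≠ Sum.inr y₀},
          ∑ v : {w : Fin g ⊕ Fin (2*a+b+1) // w ≠ Sum.inr y₀}, DD g a b u.1 v.1 :=
    Finset.sum_congr rfl fun u _ => Finset.sum_congr rfl fun v _ => hdist u v
  rw [step1]
  set e := eWedge g (2*a+b) y₀ hy with he
  have step2 : (∑ u : {w : Fin g ⊕ Fin (2*a+b+1) // w ≠ Sum.inr y₀},
          ∑ v : {w : Fin g ⊕ Fin (2*a+b+1) // w ≠ Sum.inr y₀}, DD g a b u.1 v.1)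
      = ∑ p : Fin g ⊕ Fin (2*a+b), ∑ q : Fin g ⊕ Fin (2*a+b),
          DD g a b (e p).1 (e q).1 := by
    rw [← Equiv.sum_comp e (fun u : {w : Fin g ⊕ Fin (2*a+b+1) // w ≠ Sum.inr y₀} =>
      ∑ v : {w : Fin g ⊕ Fin (2*a+b+1) // w ≠ Sum.inr y₀}, DD g a b u.1 v.1)]
    exact Finset.sum_congr rfl fun p _ =>
      (Equiv.sum_comp e (fun v : {w : Fin g ⊕ Fin (2*a+b+1) // w ≠ Sum.inr y₀} =>
        DD g a b (e p).1 v.1)).symm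
  rw [step2]
  rw [Fintype.sum_sum_type]
  have einl : ∀ i : Fin g, (e (Sum.inl i)).1 = Sum.inl i := fun i => rfl
  have einr : ∀ j : Fin (2*a+b), (e (Sum.inr j)).1
      = Sum.inr ⟨j.val+1, by have := j.isLt; omega⟩ := fun j => rfl
  have blockl : ∀ i : Fin g, (∑ q : Fin g ⊕ Fin (2*a+b), DD g a b (e (Sum.inl i)).1 (e q).1)
      = (∑ j : Fin g, dC g i.val j.val) + ((2*a+b) * dC g i.val 0 + (3*a+b)) := by
    intro i
    rw [Fintype.sum_sum_type]
    congr 1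
    have : ∀ t : Fin (2*a+b), DD g a b (e (Sum.inl i)).1 (e (Sum.inr t)).1
        = dC g i.val 0 + depT a b (t.val+1) := fun t => rfl
    rw [Finset.sum_congr rfl fun t _ => this t]
    rw [Finset.sum_add_distrib, Finset.sum_const, Finset.card_univ, Fintype.card_fin,
      smul_eq_mul]
    congr 1
    rw [Fin.sum_univ_eq_sum_range (fun x => depT a b (x+1)) (2*a+b), depSum_range]
  have blockr : ∀ s : Fin (2*a+b),
      (∑ q : Fin g ⊕ Fin (2*a+b), DD g a b (e (Sum.inr s)).1 (e q).1)
      = ((∑ j : Fin g, dC g j.val 0) + g * depT a b (s.val+1))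
        + (∑ t : Fin (2*a+b), dT a b (s.val+1) (t.val+1)) := by
    intro s
    rw [Fintype.sum_sum_type]
    congr 1
    have : ∀ j : Fin g, DD g a b (e (Sum.inr s)).1 (e (Sum.inl j)).1
        = dC g j.val 0 + depT a b (s.val+1) := fun j => rfl
    rw [Finset.sum_congr rfl fun j _ => this j]
    rw [Finset.sum_add_distrib, Finset.sum_const, Finset.card_univ, Fintype.card_fin,
      smul_eq_mul]
  rw [Finset.sum_congr rfl fun i _ => blockl i, Finset.sum_congr rfl fun s _ => blockr s]
  have ds : ∑ s : Fin (2*a+b), depT a b (s.val+1) = 3*a+b := by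
    rw [Fin.sum_univ_eq_sum_range (fun x => depT a b (x+1)) (2*a+b), depSum_range]
  have htree : ∑ s : Fin (2*a+b), (∑ t : Fin (2*a+b), dT a b (s.val+1) (t.val+1))
      = treeSum a b := by
    rw [Fin.sum_univ_eq_sum_range (fun x => ∑ t : Fin (2*a+b), dT a b (x+1) (t.val+1)) (2*a+b)]
    rw [← treeSum_range]
    refine Finset.sum_congr rfl fun x _ => ?_
    rw [Fin.sum_univ_eq_sum_range (fun y => dT a b (x+1) (y+1)) (2*a+b)]
  simp only [Finset.sum_add_distrib, Finset.sum_const, Finset.card_univ, Fintype.card_fin,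
    smul_eq_mul, ← Finset.mul_sum]
  rw [htree, ds]
  ring

/-- Moving one pendant vertex: for odd `g` and matching number `β = a₁ + (g−1)/2` with
`n = 2a₁ + g ≥ 2β ≥ 3g` and `a₁ ≥ 2`,
`W(U(T*_{a₁,0}, T*_{0,0},…,T*_{0,0})) > W(U(T*_{a₁−1,2}, T*_{0,0},…,T*_{0,0}))`,
where `U(S, T*_{0,0},…,T*_{0,0})` is the wedge of the cycle `C_g` and `S` at its root. -/
theorem wiener_move_pendant (g a : ℕ) [NeZero g] (hodd : Odd g) (hg : 3 ≤ g) (ha : 2 ≤ a)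
    (hβ : 3 * g ≤ 2 * (a + (g - 1) / 2)) :
    wienerIndex (wedge (SimpleGraph.cycleGraph g) (Tstar (a - 1) 2) 0 ⟨0, by omega⟩) <
      wienerIndex (wedge (SimpleGraph.cycleGraph g) (Tstar a 0) 0 ⟨0, by omega⟩) := by
  have h1 := wedge_sum g a 0 hg ⟨0, by omega⟩ rfl
  have h2 := wedge_sum g (a-1) 2 hg ⟨0, by omega⟩ rfl
  have t1 := treeSum_eq a 0
  have t2 := treeSum_eq (a-1) 2
  have ha1 : 1 ≤ a := by omega
  have key : ((∑ i : Fin g, ∑ j : Fin g, dC g i.val j.val)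
        + 2 * ((2*(a-1)+2) * (∑ i : Fin g, dC g i.val 0) + g * (3*(a-1)+2)) + treeSum (a-1) 2)
      + 2*(2*a+g-3)
      = (∑ i : Fin g, ∑ j : Fin g, dC g i.val j.val)
        + 2 * ((2*a+0) * (∑ i : Fin g, dC g i.val 0) + g * (3*a+0)) + treeSum a 0 := by
    zify [ha1, show 3 ≤ 2*a+g by omega] at t1 t2 ⊢
    linarith
  unfold wienerIndex
  rw [h1, h2, ← key]
  have hx : ∀ x k : ℕ, 0 < k → x / 2 < (x + 2*k) / 2 := by intro x k hk; omega
  exact hx _ _ (by omega)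
end
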